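/- arXiv:1310.3787 — 7 statements merged into one kernel-verified Lean document; each statement's English description precedes it below -/
import Mathlib

section
/- Let $\Psi: \mathbb{R}^n \to \mathbb{R}$ be differentiable with $L_\Psi$-Lipschitz gradient and bounded below by $\Psi^*$. Consider the AG iteration: $x_0^{ag} = x_0$, and for $k \ge 1$, $x_k^{md} = (1-\alpha_k)x_{k-1}^{ag} + \alpha_k x_{k-1}$, $x_k = x_{k-1} - \lambda_k\nabla\Psi(x_k^{md})$, $x_k^{ag} = x_k^{md} - \beta_k\nabla\Psi(x_k^{md})$, with $\alpha_1 = 1$, $\alpha_k \in (0,1)$ for $k \ge 2$, $\beta_k, \lambda_k > 0$. If for each $k \le N$ the quantity $C_k := 1 - L_\Psi\lambda_k - \frac{L_\Psi(\lambda_k - \beta_k)^2}{2\alpha_k\Gamma_k\lambda_k}\sum_{\tau=k}^N\Gamma_\tau$ is positive, where $\Gamma_1=1$, $\Gamma_k = (1-\alpha_k)\Gamma_{k-1}$, then $\min_{k=1,\ldots,N}\|\nabla\Psi(x_k^{md})\|^2 \le \frac{\Psi(x_0) - \Psi^*}{\sum_{k=1}^N \lambda_k C_k}$. -/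
open Finset

lemma ag_descent {E : Type*} [NormedAddCommGroup E] [InnerProductSpace ℝ E] [CompleteSpace E]
    (Ψ : E → ℝ) (g : E → E) (L : ℝ)
    (hg : ∀ x, HasGradientAt Ψ (g x) x)
    (hL : ∀ x y, ‖g x - g y‖ ≤ L * ‖x - y‖) (a b : E) :
    Ψ b ≤ Ψ a + inner ℝ (g a) (b - a) + L / 2 * ‖b - a‖ ^ 2 := by
  set v := b - a with hv
  have hline : ∀ t : ℝ, HasDerivAt (fun s : ℝ => a + s • v) v t := by
    intro t
    simpa using ((hasDerivAt_id t).smul_const v).const_add a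
  have hφ : ∀ t : ℝ, HasDerivAt (fun s : ℝ => Ψ (a + s • v))
      (inner ℝ (g (a + t • v)) v : ℝ) t := by
    intro t
    have h1 := (hg (a + t • v)).hasFDerivAt.comp_hasDerivAt t (hline t)
    simp [InnerProductSpace.toDual_apply_apply] at h1; exact h1
  set F : ℝ → ℝ := fun t => Ψ a + t * (inner ℝ (g a) v : ℝ) + L / 2 * t ^ 2 * ‖v‖ ^ 2
      - Ψ (a + t • v) with hF
  have hF' : ∀ t : ℝ, HasDerivAt F
      ((inner ℝ (g a) v : ℝ) + L * t * ‖v‖ ^ 2 - (inner ℝ (g (a + t • v)) v : ℝ)) t := by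
    intro t
    have h1 : HasDerivAt (fun t : ℝ => Ψ a + t * (inner ℝ (g a) v : ℝ) + L / 2 * t ^ 2 * ‖v‖ ^ 2)
        ((inner ℝ (g a) v : ℝ) + L * t * ‖v‖ ^ 2) t := by
      have hp : HasDerivAt (fun t : ℝ => t ^ 2) (2 * t) t := by
        simpa using hasDerivAt_pow 2 t
      have h2 : HasDerivAt (fun t : ℝ => L / 2 * t ^ 2 * ‖v‖ ^ 2)
          (L / 2 * (2 * t) * ‖v‖ ^ 2) t := (hp.const_mul (L / 2)).mul_const _
      have h3 : HasDerivAt (fun t : ℝ => t * (inner ℝ (g a) v : ℝ)) (inner ℝ (g a) v : ℝ) t := by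
        simpa using (hasDerivAt_id t).mul_const (inner ℝ (g a) v : ℝ)
      have := ((h3.const_add (Ψ a)).add h2)
      convert this using 1
      all_goals first | rfl | ring
    exact h1.sub (hφ t)
  have hmono : MonotoneOn F (Set.Icc (0:ℝ) 1) := by
    apply monotoneOn_of_deriv_nonneg (convex_Icc 0 1)
    · exact fun t _ => ((hF' t).continuousAt.continuousWithinAt)
    · intro t ht
      exact ((hF' t).differentiableAt.differentiableWithinAt)
    · intro t ht
      rw [(hF' t).deriv]
      have ht0 : 0 ≤ t := by
        simp only [interior_Icc, Set.mem_Ioo] at ht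
        linarith [ht.1]
      have h1 : (inner ℝ (g (a + t • v)) v : ℝ) - (inner ℝ (g a) v : ℝ)
          ≤ L * t * ‖v‖ ^ 2 := by
        have h2 : (inner ℝ (g (a + t • v) - g a) v : ℝ) ≤ ‖g (a + t • v) - g a‖ * ‖v‖ :=
          real_inner_le_norm _ _
        have h3 : ‖g (a + t • v) - g a‖ ≤ L * ‖t • v‖ := by
          simpa using hL (a + t • v) a
        have h4 : ‖t • v‖ = t * ‖v‖ := by
          rw [norm_smul, Real.norm_eq_abs, abs_of_nonneg ht0]
        have h5 : (0:ℝ) ≤ ‖v‖ := norm_nonneg _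
        have h6 : ‖g (a + t • v) - g a‖ * ‖v‖ ≤ L * (t * ‖v‖) * ‖v‖ := by
          rw [← h4]
          exact mul_le_mul_of_nonneg_right h3 h5
        rw [inner_sub_left] at h2
        nlinarith [norm_nonneg (g (a + t • v) - g a)]
      linarith
  have h01 : F 0 ≤ F 1 := hmono (by norm_num) (by norm_num) zero_le_one
  have hF0 : F 0 = 0 := by simp [hF]
  have hF1 : F 1 = Ψ a + (inner ℝ (g a) v : ℝ) + L / 2 * ‖v‖ ^ 2 - Ψ b := by
    simp [hF, hv]
  rw [hF0, hF1] at h01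
  linarith


lemma ag_norm_combo {E : Type*} [NormedAddCommGroup E] [InnerProductSpace ℝ E]
    (d gv : E) (αk c : ℝ) (h1 : 0 < αk) (h2 : αk ≤ 1) :
    ‖(1 - αk) • d - c • gv‖ ^ 2 ≤ (1 - αk) * ‖d‖ ^ 2 + c ^ 2 / αk * ‖gv‖ ^ 2 := by
  have hkey : (1 - αk) * ‖d‖ ^ 2 + c ^ 2 / αk * ‖gv‖ ^ 2 - ‖(1 - αk) • d - c • gv‖ ^ 2
      = ((1 - αk) / αk) * ‖αk • d + c • gv‖ ^ 2 := by
    rw [norm_sub_sq_real, norm_add_sq_real, norm_smul, norm_smul, norm_smul,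
      real_inner_smul_left, real_inner_smul_right, real_inner_smul_left, real_inner_smul_right,
      mul_pow, mul_pow, mul_pow, Real.norm_eq_abs, Real.norm_eq_abs, Real.norm_eq_abs,
      sq_abs, sq_abs, sq_abs]
    field_simp
    ring
  have h3 : 0 ≤ ((1 - αk) / αk) * ‖αk • d + c • gv‖ ^ 2 :=
    mul_nonneg (div_nonneg (by linarith) h1.le) (sq_nonneg _)
  linarith

set_option maxHeartbeats 1000000 in
theorem ag_nonconvex_convergence {n : ℕ}
    (Ψ : EuclideanSpace ℝ (Fin n) → ℝ) (g : EuclideanSpace ℝ (Fin n) → EuclideanSpace ℝ (Fin n))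
    (LΨ Ψstar : ℝ)
    (hg : ∀ x, HasGradientAt Ψ (g x) x)
    (hL : ∀ x y, ‖g x - g y‖ ≤ LΨ * ‖x - y‖)
    (hbd : ∀ x, Ψstar ≤ Ψ x)
    (α β lam Γ : ℕ → ℝ)
    (hα1 : α 1 = 1) (hα : ∀ k ≥ 2, α k ∈ Set.Ioo (0:ℝ) 1)
    (hβ : ∀ k ≥ 1, 0 < β k) (hlam : ∀ k ≥ 1, 0 < lam k)
    (hΓ1 : Γ 1 = 1) (hΓ : ∀ k ≥ 2, Γ k = (1 - α k) * Γ (k - 1))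
    (x xag xmd : ℕ → EuclideanSpace ℝ (Fin n))
    (hag0 : xag 0 = x 0)
    (hmd : ∀ k ≥ 1, xmd k = (1 - α k) • xag (k - 1) + α k • x (k - 1))
    (hx : ∀ k ≥ 1, x k = x (k - 1) - lam k • g (xmd k))
    (hxag : ∀ k ≥ 1, xag k = xmd k - β k • g (xmd k))
    (N : ℕ) (hN : 1 ≤ N)
    (C : ℕ → ℝ)
    (hC : ∀ k, C k = 1 - LΨ * lam k -
      LΨ * (lam k - β k) ^ 2 / (2 * α k * Γ k * lam k) * ∑ τ ∈ Finset.Icc k N, Γ τ)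
    (hCpos : ∀ k ∈ Finset.Icc 1 N, 0 < C k) :
    ∃ k ∈ Finset.Icc 1 N,
      ‖g (xmd k)‖ ^ 2 ≤ (Ψ (x 0) - Ψstar) / ∑ j ∈ Finset.Icc 1 N, lam j * C j := by
  classical
  have h1N : (1 : ℕ) ∈ Finset.Icc 1 N := by simp [hN]
  have hD : 0 < ∑ j ∈ Finset.Icc 1 N, lam j * C j :=
    Finset.sum_pos (fun j hj => mul_pos (hlam j (Finset.mem_Icc.mp hj).1) (hCpos j hj)) ⟨1, h1N⟩
  by_cases htriv : ∀ z w : EuclideanSpace ℝ (Fin n), z = w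
  · refine ⟨1, h1N, ?_⟩
    have hz : g (xmd 1) = 0 := htriv _ _
    rw [hz]
    simp only [norm_zero]
    rw [zero_pow (by norm_num)]
    exact div_nonneg (by linarith [hbd (x 0)]) hD.le
  push_neg at htriv
  obtain ⟨z, w, hzw⟩ := htriv
  have hL0 : 0 ≤ LΨ := by
    have h1 := (norm_nonneg (g z - g w)).trans (hL z w)
    have h2 : 0 < ‖z - w‖ := by
      rw [norm_pos_iff, sub_ne_zero]; exact hzw
    nlinarith
  -- basic facts about the parameters
  have hαk : ∀ k, 1 ≤ k → 0 < α k ∧ α k ≤ 1 := by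
    intro k hk
    rcases eq_or_lt_of_le hk with h | h
    · rw [← h, hα1]; norm_num
    · exact ⟨(hα k h).1, (hα k h).2.le⟩
  have hΓpos : ∀ k, 1 ≤ k → 0 < Γ k := by
    intro k hk
    induction k, hk using Nat.le_induction with
    | base => rw [hΓ1]; norm_num
    | succ k hk ih =>
      rw [hΓ (k + 1) (by omega), Nat.add_sub_cancel]
      have h2 := hα (k + 1) (by omega)
      have : 0 < 1 - α (k + 1) := by linarith [h2.2]
      positivity
  obtain ⟨S, hSdef⟩ : ∃ S : ℕ → ℝ, S =
      fun m => ∑ j ∈ Finset.Icc 1 m, (lam j - β j) ^ 2 / (α j * Γ j) * ‖g (xmd j)‖ ^ 2 :=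
    ⟨_, rfl⟩
  have hterm : ∀ j, 1 ≤ j → 0 ≤ (lam j - β j) ^ 2 / (α j * Γ j) * ‖g (xmd j)‖ ^ 2 := by
    intro j hj
    have h1 := (hαk j hj).1
    have h2 := hΓpos j hj
    positivity
  have hS0 : ∀ m, 0 ≤ S m := by
    intro m
    rw [hSdef]
    exact Finset.sum_nonneg fun j hj => hterm j (Finset.mem_Icc.mp hj).1
  have hSsucc : ∀ m, S (m + 1) = S m + (lam (m+1) - β (m+1)) ^ 2 / (α (m+1) * Γ (m+1)) *
      ‖g (xmd (m+1))‖ ^ 2 := by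
    intro m
    rw [hSdef]
    exact Finset.sum_Icc_succ_top (by omega) _
  obtain ⟨d, hddef⟩ : ∃ d : ℕ → EuclideanSpace ℝ (Fin n), d = fun k => x k - xag k := ⟨_, rfl⟩
  have hd0 : d 0 = 0 := by rw [hddef]; simp [hag0]
  have hdrec : ∀ k, 1 ≤ k → d k = (1 - α k) • d (k - 1) - (lam k - β k) • g (xmd k) := by
    intro k hk
    simp only [hddef]
    rw [hx k hk, hxag k hk, hmd k hk]
    module
  have hdb : ∀ k, 1 ≤ k → ‖d k‖ ^ 2 ≤ Γ k * S k := by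
    intro k hk
    induction k, hk using Nat.le_induction with
    | base =>
      rw [hdrec 1 le_rfl, hd0, smul_zero, zero_sub, norm_neg, norm_smul]
      have hS1 : S 1 = (lam 1 - β 1) ^ 2 / (α 1 * Γ 1) * ‖g (xmd 1)‖ ^ 2 := by
        rw [hSdef]; simp
      rw [hS1, hΓ1, hα1]
      rw [mul_pow, Real.norm_eq_abs, sq_abs]
      exact le_of_eq (by ring)
    | succ k hk ih =>
      rw [hdrec (k + 1) (by omega), Nat.add_sub_cancel]
      have hαm := hα (k + 1) (by omega)
      have h1 : 0 < α (k + 1) := hαm.1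
      have h2 : α (k + 1) < 1 := hαm.2
      have hcomb := ag_norm_combo (d k) (g (xmd (k+1))) (α (k+1)) (lam (k+1) - β (k+1)) h1 h2.le
      have h3 : (1 - α (k+1)) * ‖d k‖ ^ 2 ≤ (1 - α (k+1)) * (Γ k * S k) :=
        mul_le_mul_of_nonneg_left ih (by linarith)
      have h4 : Γ (k+1) * S (k+1) = (1 - α (k+1)) * (Γ k * S k)
          + (lam (k+1) - β (k+1)) ^ 2 / (α (k+1)) * ‖g (xmd (k+1))‖ ^ 2 := by
        rw [hSsucc k, hΓ (k + 1) (by omega), Nat.add_sub_cancel]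
        have hΓk : Γ k ≠ 0 := (hΓpos k hk).ne'
        have hα0 : α (k+1) ≠ 0 := h1.ne'
        have h1α : (1 : ℝ) - α (k+1) ≠ 0 := by linarith
        field_simp
      linarith
  -- per-step inequality
  have hstep : ∀ k, 1 ≤ k → Ψ (x k) ≤ Ψ (x (k - 1))
      - lam k * (1 - LΨ * lam k) * ‖g (xmd k)‖ ^ 2 + LΨ / 2 * (Γ k * S k) := by
    intro k hk
    have hdesc := ag_descent Ψ g LΨ hg hL (x (k - 1)) (x k)
    have hxx : x k - x (k - 1) = -(lam k • g (xmd k)) := by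
      rw [hx k hk]; module
    rw [hxx] at hdesc
    have hBeq : x (k - 1) - xmd k = (1 - α k) • d (k - 1) := by
      rw [hmd k hk]
      simp only [hddef]
      module
    have hB : ‖x (k - 1) - xmd k‖ ^ 2 ≤ Γ k * S k := by
      rcases eq_or_lt_of_le hk with h | h
      · subst h
        rw [hBeq]
        simp only [Nat.sub_self, hd0, smul_zero, norm_zero]
        rw [zero_pow (by norm_num)]
        exact mul_nonneg (hΓpos 1 le_rfl).le (hS0 1)
      · have hk2 : 2 ≤ k := h
        have hk1 : 1 ≤ k - 1 := by omega
        have hαm := hα k hk2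
        have h5 : ‖(1 - α k) • d (k - 1)‖ ^ 2 = (1 - α k) ^ 2 * ‖d (k - 1)‖ ^ 2 := by
          rw [norm_smul, mul_pow, Real.norm_eq_abs, sq_abs]
        have h6 := hdb (k - 1) hk1
        have h7 : Γ k = (1 - α k) * Γ (k - 1) := hΓ k hk2
        have h8 : S (k - 1) ≤ S k := by
          have := hSsucc (k - 1)
          rw [Nat.sub_add_cancel hk] at this
          have := hterm k hk
          linarith
        have h9 : 0 ≤ Γ k := (hΓpos k hk).le
        have h10 : 0 ≤ Γ (k-1) * S (k-1) :=
          mul_nonneg (hΓpos (k-1) hk1).le (hS0 (k-1))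
        rw [hBeq, h5]
        have hq : (1 - α k) ^ 2 ≤ 1 - α k := by nlinarith [hαm.1, hαm.2]
        calc (1 - α k) ^ 2 * ‖d (k - 1)‖ ^ 2
            ≤ (1 - α k) ^ 2 * (Γ (k-1) * S (k-1)) := by
              exact mul_le_mul_of_nonneg_left h6 (sq_nonneg _)
          _ ≤ (1 - α k) * (Γ (k-1) * S (k-1)) := mul_le_mul_of_nonneg_right hq h10
          _ = Γ k * S (k - 1) := by rw [h7]; ring
          _ ≤ Γ k * S k := mul_le_mul_of_nonneg_left h8 h9
    -- rewrite the descent inequality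
    have hinner : (inner ℝ (g (x (k-1))) (-(lam k • g (xmd k))) : ℝ)
        = -(lam k * ((inner ℝ (g (x (k-1)) - g (xmd k)) (g (xmd k)) : ℝ) + ‖g (xmd k)‖ ^ 2)) := by
      rw [inner_neg_right, real_inner_smul_right, inner_sub_left,
        real_inner_self_eq_norm_sq]
      ring
    have hnorm2 : ‖-(lam k • g (xmd k))‖ ^ 2 = lam k ^ 2 * ‖g (xmd k)‖ ^ 2 := by
      rw [norm_neg, norm_smul, mul_pow, Real.norm_eq_abs, sq_abs]
    rw [hinner, hnorm2] at hdesc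
    have hlamk := hlam k hk
    have hI : -(inner ℝ (g (x (k-1)) - g (xmd k)) (g (xmd k)) : ℝ)
        ≤ LΨ * ‖x (k-1) - xmd k‖ * ‖g (xmd k)‖ := by
      have h1 : -(inner ℝ (g (x (k-1)) - g (xmd k)) (g (xmd k)) : ℝ)
          ≤ ‖g (x (k-1)) - g (xmd k)‖ * ‖g (xmd k)‖ := by
        have := real_inner_le_norm (g (xmd k) - g (x (k-1))) (g (xmd k))
        have heq : (inner ℝ (g (xmd k) - g (x (k-1))) (g (xmd k)) : ℝ)
            = -(inner ℝ (g (x (k-1)) - g (xmd k)) (g (xmd k)) : ℝ) := by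
          rw [← inner_neg_left]; congr 1; abel
        rw [heq] at this
        calc -(inner ℝ (g (x (k-1)) - g (xmd k)) (g (xmd k)) : ℝ)
            ≤ ‖g (xmd k) - g (x (k-1))‖ * ‖g (xmd k)‖ := this
          _ = ‖g (x (k-1)) - g (xmd k)‖ * ‖g (xmd k)‖ := by rw [norm_sub_rev]
      have h2 : ‖g (x (k-1)) - g (xmd k)‖ * ‖g (xmd k)‖
          ≤ LΨ * ‖x (k-1) - xmd k‖ * ‖g (xmd k)‖ :=
        mul_le_mul_of_nonneg_right (hL _ _) (norm_nonneg _)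
      linarith
    -- Young's inequality
    have hY : LΨ * ‖x (k-1) - xmd k‖ * ‖g (xmd k)‖ * lam k
        ≤ LΨ / 2 * ‖x (k-1) - xmd k‖ ^ 2 + LΨ / 2 * lam k ^ 2 * ‖g (xmd k)‖ ^ 2 := by
      nlinarith [sq_nonneg (‖x (k-1) - xmd k‖ - lam k * ‖g (xmd k)‖), hL0,
        mul_nonneg hL0 (sq_nonneg (‖x (k-1) - xmd k‖ - lam k * ‖g (xmd k)‖))]
    have hBL : LΨ / 2 * ‖x (k-1) - xmd k‖ ^ 2 ≤ LΨ / 2 * (Γ k * S k) := by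
      nlinarith
    nlinarith [mul_le_mul_of_nonneg_left hI hlamk.le]
  -- telescoping
  have htel : ∀ m, Ψ (x m) ≤ Ψ (x 0) - ∑ k ∈ Finset.Icc 1 m,
      (lam k * (1 - LΨ * lam k) * ‖g (xmd k)‖ ^ 2 - LΨ / 2 * (Γ k * S k)) := by
    intro m
    induction m with
    | zero => simp
    | succ m ih =>
      rw [Finset.sum_Icc_succ_top (by omega)]
      have h := hstep (m + 1) (by omega)
      rw [Nat.add_sub_cancel] at h
      linarith
  have hmain0 : ∑ k ∈ Finset.Icc 1 N,
      (lam k * (1 - LΨ * lam k) * ‖g (xmd k)‖ ^ 2 - LΨ / 2 * (Γ k * S k))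
      ≤ Ψ (x 0) - Ψstar := by
    have := htel N
    have := hbd (x N)
    linarith
  -- sum swap
  have hswap : ∑ k ∈ Finset.Icc 1 N, Γ k * S k
      = ∑ k ∈ Finset.Icc 1 N, ((lam k - β k) ^ 2 / (α k * Γ k) * ‖g (xmd k)‖ ^ 2
          * ∑ τ ∈ Finset.Icc k N, Γ τ) := by
    calc ∑ k ∈ Finset.Icc 1 N, Γ k * S k
        = ∑ k ∈ Finset.Icc 1 N, ∑ j ∈ Finset.Icc 1 k,
            Γ k * ((lam j - β j) ^ 2 / (α j * Γ j) * ‖g (xmd j)‖ ^ 2) := by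
          refine Finset.sum_congr rfl fun k _ => ?_
          rw [hSdef, Finset.mul_sum]
      _ = ∑ j ∈ Finset.Icc 1 N, ∑ k ∈ Finset.Icc j N,
            Γ k * ((lam j - β j) ^ 2 / (α j * Γ j) * ‖g (xmd j)‖ ^ 2) := by
          refine Finset.sum_comm' fun k j => ?_
          simp only [Finset.mem_Icc]
          omega
      _ = ∑ j ∈ Finset.Icc 1 N, ((lam j - β j) ^ 2 / (α j * Γ j) * ‖g (xmd j)‖ ^ 2
            * ∑ τ ∈ Finset.Icc j N, Γ τ) := by
          refine Finset.sum_congr rfl fun j _ => ?_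
          rw [Finset.mul_sum]
          refine Finset.sum_congr rfl fun k _ => ?_
          ring
  -- rewrite the C sum
  have hsum_eq : ∑ k ∈ Finset.Icc 1 N, lam k * C k * ‖g (xmd k)‖ ^ 2
      = ∑ k ∈ Finset.Icc 1 N, (lam k * (1 - LΨ * lam k) * ‖g (xmd k)‖ ^ 2
          - LΨ / 2 * ((lam k - β k) ^ 2 / (α k * Γ k) * ‖g (xmd k)‖ ^ 2
            * ∑ τ ∈ Finset.Icc k N, Γ τ)) := by
    refine Finset.sum_congr rfl fun k hk => ?_
    obtain ⟨hk1, _⟩ := Finset.mem_Icc.mp hk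
    have h1 : lam k ≠ 0 := (hlam k hk1).ne'
    have h2 : α k ≠ 0 := (hαk k hk1).1.ne'
    have h3 : Γ k ≠ 0 := (hΓpos k hk1).ne'
    rw [hC k]
    field_simp
  have hfinal : ∑ k ∈ Finset.Icc 1 N, lam k * C k * ‖g (xmd k)‖ ^ 2
      ≤ Ψ (x 0) - Ψstar := by
    rw [hsum_eq]
    rw [Finset.sum_sub_distrib] at hmain0 ⊢
    rw [← Finset.mul_sum] at hmain0 ⊢
    rw [← hswap]
    exact hmain0
  obtain ⟨m, hm, hmin⟩ :=
    Finset.exists_min_image (Finset.Icc 1 N) (fun k => ‖g (xmd k)‖ ^ 2) ⟨1, h1N⟩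
  refine ⟨m, hm, ?_⟩
  rw [le_div_iff₀ hD]
  calc ‖g (xmd m)‖ ^ 2 * ∑ j ∈ Finset.Icc 1 N, lam j * C j
      = ∑ j ∈ Finset.Icc 1 N, lam j * C j * ‖g (xmd m)‖ ^ 2 := by
        rw [Finset.mul_sum]
        exact Finset.sum_congr rfl fun j _ => mul_comm _ _
    _ ≤ ∑ j ∈ Finset.Icc 1 N, lam j * C j * ‖g (xmd j)‖ ^ 2 :=
        Finset.sum_le_sum fun j hj => mul_le_mul_of_nonneg_left (hmin j hj)
          (mul_pos (hlam j (Finset.mem_Icc.mp hj).1) (hCpos j hj)).le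
    _ ≤ Ψ (x 0) - Ψstar := hfinal
end

section
/- Let $\Psi: \mathbb{R}^n \to \mathbb{R}$ be convex, differentiable with $L_\Psi$-Lipschitz gradient, with minimizer $x^*$. Consider the AG iteration $x_k^{md} = (1-\alpha_k)x_{k-1}^{ag} + \alpha_k x_{k-1}$, $x_k = x_{k-1} - \lambda_k\nabla\Psi(x_k^{md})$, $x_k^{ag} = x_k^{md} - \beta_k\nabla\Psi(x_k^{md})$, starting from $x_0^{ag} = x_0$, with $\alpha_1 = 1$, $\alpha_k \in (0,1)$ for $k \ge 2$. If $\alpha_k\lambda_k \le \beta_k < 1/L_\Psi$ for all $k$ and the sequence $\alpha_k/(\lambda_k\Gamma_k)$ is nonincreasing (where $\Gamma_1 = 1$, $\Gamma_k = (1-\alpha_k)\Gamma_{k-1}$), then for any $N \ge 1$: $\Psi(x_N^{ag}) - \Psi(x^*) \le \frac{\Gamma_N\|x_0 - x^*\|^2}{2\lambda_1}$. -/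
set_option maxHeartbeats 1000000

open Finset RealInnerProductSpace

section aux
variable {E : Type*} [NormedAddCommGroup E] [InnerProductSpace ℝ E] [CompleteSpace E]

lemma line_hasDerivAt (f : E → ℝ) (g : E → E) (hg : ∀ x, HasGradientAt f (g x) x)
    (a v : E) (t : ℝ) :
    HasDerivAt (fun s : ℝ => f (a + s • v)) ⟪g (a + t • v), v⟫ t := by
  have hline : HasDerivAt (fun s : ℝ => a + s • v) v t := by
    simpa using ((hasDerivAt_id t).smul_const v).const_add a
  have := (hg (a + t • v)).hasFDerivAt.comp_hasDerivAt t hline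
  simpa [InnerProductSpace.toDual_apply_apply, Function.comp_def] using this

lemma grad_convex_ineq (f : E → ℝ) (g : E → E) (hg : ∀ x, HasGradientAt f (g x) x)
    (hconv : ConvexOn ℝ Set.univ f) (a b : E) :
    f a + ⟪g a, b - a⟫ ≤ f b := by
  set φ : ℝ → ℝ := fun t => f (a + t • (b - a)) with hφ
  have hφconv : ConvexOn ℝ Set.univ φ := by
    have := hconv.comp_affineMap (AffineMap.lineMap a b)
    have heq : φ = f ∘ (AffineMap.lineMap a b : ℝ →ᵃ[ℝ] E) := by
      funext t
      simp [hφ, AffineMap.lineMap_apply, add_comm, Function.comp]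
    rw [heq]
    simpa using this
  have hd : HasDerivAt φ ⟪g a, b - a⟫ 0 := by
    simpa using line_hasDerivAt f g hg a (b - a) 0
  have := hφconv.le_slope_of_hasDerivAt (Set.mem_univ (0:ℝ)) (Set.mem_univ (1:ℝ)) one_pos hd
  have hs : slope φ 0 1 = f b - f a := by
    simp [slope_def_field, hφ]
  rw [hs] at this
  linarith

lemma descent_ineq (f : E → ℝ) (g : E → E) (L : ℝ) (hg : ∀ x, HasGradientAt f (g x) x)
    (hL : ∀ x y, ‖g x - g y‖ ≤ L * ‖x - y‖) (a b : E) :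
    f b ≤ f a + ⟪g a, b - a⟫ + L / 2 * ‖b - a‖ ^ 2 := by
  set v := b - a with hv
  set F : ℝ → ℝ := fun t => f (a + t • v) - t * ⟪g a, v⟫ - L * t ^ 2 / 2 * ‖v‖ ^ 2 with hF
  have hFd : ∀ t : ℝ, HasDerivAt F (⟪g (a + t • v), v⟫ - ⟪g a, v⟫ - L * t * ‖v‖ ^ 2) t := by
    intro t
    have h1 := line_hasDerivAt f g hg a v t
    have h2 : HasDerivAt (fun s : ℝ => s * ⟪g a, v⟫) ⟪g a, v⟫ t := by
      simpa using (hasDerivAt_id t).mul_const ⟪g a, v⟫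
    have h3 : HasDerivAt (fun s : ℝ => L * s ^ 2 / 2 * ‖v‖ ^ 2) (L * t * ‖v‖ ^ 2) t := by
      have := (((hasDerivAt_pow 2 t).const_mul L).div_const 2).mul_const (‖v‖ ^ 2)
      exact this.congr_deriv (by rw [show (2:ℕ) - 1 = 1 from rfl]; push_cast; ring)
    exact (h1.sub h2).sub h3
  have hanti : AntitoneOn F (Set.Icc (0:ℝ) 1) := by
    apply antitoneOn_of_deriv_nonpos (convex_Icc 0 1)
    · exact Continuous.continuousOn
        (continuous_iff_continuousAt.2 fun t => (hFd t).differentiableAt.continuousAt)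
    · exact fun t _ => (hFd t).differentiableAt.differentiableWithinAt
    · intro t ht
      rw [interior_Icc] at ht
      rw [(hFd t).deriv]
      have hb : ⟪g (a + t • v) - g a, v⟫ ≤ L * t * ‖v‖ ^ 2 := by
        calc ⟪g (a + t • v) - g a, v⟫ ≤ ‖g (a + t • v) - g a‖ * ‖v‖ := real_inner_le_norm _ _
          _ ≤ (L * ‖(a + t • v) - a‖) * ‖v‖ := by
              apply mul_le_mul_of_nonneg_right _ (norm_nonneg v)
              exact hL _ _
          _ = L * t * ‖v‖ ^ 2 := by
              have : ‖(a + t • v) - a‖ = t * ‖v‖ := by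
                simp [norm_smul, abs_of_pos ht.1]
              rw [this]; ring
      rw [inner_sub_left] at hb
      linarith
  have h01 := hanti (Set.mem_Icc.2 ⟨le_refl 0, zero_le_one⟩)
    (Set.mem_Icc.2 ⟨zero_le_one, le_refl 1⟩) zero_le_one
  have hF0 : F 0 = f a := by simp [hF]
  have hF1 : F 1 = f b - ⟪g a, v⟫ - L / 2 * ‖v‖ ^ 2 := by
    simp [hF]
    simp [hv]
  rw [hF0, hF1] at h01
  linarith

end aux

theorem ag_convex_function_gap {n : ℕ}
    (Ψ : EuclideanSpace ℝ (Fin n) → ℝ) (g : EuclideanSpace ℝ (Fin n) → EuclideanSpace ℝ (Fin n))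
    (LΨ : ℝ)
    (hg : ∀ x, HasGradientAt Ψ (g x) x)
    (hL : ∀ x y, ‖g x - g y‖ ≤ LΨ * ‖x - y‖)
    (hconv : ConvexOn ℝ Set.univ Ψ)
    (xstar : EuclideanSpace ℝ (Fin n)) (hmin : ∀ z, Ψ xstar ≤ Ψ z)
    (α β lam Γ : ℕ → ℝ)
    (hα1 : α 1 = 1) (hα : ∀ k ≥ 2, α k ∈ Set.Ioo (0:ℝ) 1)
    (hΓ1 : Γ 1 = 1) (hΓ : ∀ k ≥ 2, Γ k = (1 - α k) * Γ (k - 1))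
    (hstep : ∀ k ≥ 1, α k * lam k ≤ β k ∧ β k < 1 / LΨ)
    (hlam : ∀ k ≥ 1, 0 < lam k)
    (hmono : ∀ k ≥ 1, α (k + 1) / (lam (k + 1) * Γ (k + 1)) ≤ α k / (lam k * Γ k))
    (x xag xmd : ℕ → EuclideanSpace ℝ (Fin n))
    (hag0 : xag 0 = x 0)
    (hmd : ∀ k ≥ 1, xmd k = (1 - α k) • xag (k - 1) + α k • x (k - 1))
    (hx : ∀ k ≥ 1, x k = x (k - 1) - lam k • g (xmd k))
    (hxag : ∀ k ≥ 1, xag k = xmd k - β k • g (xmd k)) :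
    ∀ N ≥ 1, Ψ (xag N) - Ψ xstar ≤ Γ N * ‖x 0 - xstar‖ ^ 2 / (2 * lam 1) := by
  have hα' : ∀ k, 1 ≤ k → 0 < α k ∧ α k ≤ 1 := by
    intro k hk
    rcases eq_or_lt_of_le hk with h | h
    · rw [← h, hα1]; exact ⟨one_pos, le_refl 1⟩
    · exact ⟨(hα k h).1, (hα k h).2.le⟩
  have hβpos : ∀ k, 1 ≤ k → 0 < β k := fun k hk =>
    lt_of_lt_of_le (mul_pos (hα' k hk).1 (hlam k hk)) (hstep k hk).1
  have hLpos : 0 < LΨ := by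
    by_contra h
    push_neg at h
    have h1 : 1 / LΨ ≤ 0 := one_div_nonpos.mpr h
    linarith [(hstep 1 le_rfl).2, hβpos 1 le_rfl]
  have hβL : ∀ k, 1 ≤ k → LΨ * β k < 1 := by
    intro k hk
    have := (lt_div_iff₀ hLpos).mp (hstep k hk).2
    linarith
  have hΓpos : ∀ N, 1 ≤ N → 0 < Γ N := by
    intro N hN
    induction N, hN using Nat.le_induction with
    | base => rw [hΓ1]; exact one_pos
    | succ N hN ih =>
      rw [hΓ (N + 1) (by omega)]
      simp only [Nat.add_sub_cancel]
      exact mul_pos (by linarith [(hα (N + 1) (by omega)).2]) ih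
  -- one-step inequality
  have hkey : ∀ k, 1 ≤ k → 2 * lam k * Ψ (xag k) ≤
      2 * lam k * ((1 - α k) * Ψ (xag (k - 1)) + α k * Ψ xstar)
      + α k * (‖x (k - 1) - xstar‖ ^ 2 - ‖x k - xstar‖ ^ 2) := by
    intro k hk
    have hMd := hmd k hk
    have hXk := hx k hk
    have hAg := hxag k hk
    have hlk := hlam k hk
    set G := g (xmd k) with hG
    have hdesc := descent_ineq Ψ g LΨ hg hL (xmd k) (xag k)
    have hsub : xag k - xmd k = -(β k • G) := by rw [hAg]; module
    have hi1 : ⟪G, xag k - xmd k⟫ = -(β k * ‖G‖ ^ 2) := by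
      rw [hsub, inner_neg_right, real_inner_smul_right, real_inner_self_eq_norm_sq]
    have hn1 : ‖xag k - xmd k‖ ^ 2 = β k ^ 2 * ‖G‖ ^ 2 := by
      rw [hsub, norm_neg, norm_smul, mul_pow, Real.norm_eq_abs, sq_abs]
    rw [hi1, hn1] at hdesc
    have hA1 := grad_convex_ineq Ψ g hg hconv (xmd k) (xag (k - 1))
    have hA2 := grad_convex_ineq Ψ g hg hconv (xmd k) xstar
    have hw1 : 0 ≤ 1 - α k := by linarith [(hα' k hk).2]
    have hw2 : 0 ≤ α k := (hα' k hk).1.le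
    have hB1 := mul_le_mul_of_nonneg_left hA1 hw1
    have hB2 := mul_le_mul_of_nonneg_left hA2 hw2
    have hcomb : (1 - α k) * ⟪G, xag (k - 1) - xmd k⟫ + α k * ⟪G, xstar - xmd k⟫
        = α k * ⟪G, xstar - x (k - 1)⟫ := by
      rw [← real_inner_smul_right, ← real_inner_smul_right, ← real_inner_smul_right,
        ← inner_add_right]
      congr 1
      rw [hMd]; module
    have hflip : ⟪G, xstar - x (k - 1)⟫ = -⟪G, x (k - 1) - xstar⟫ := by
      rw [← inner_neg_right, neg_sub]
    have hsum : Ψ (xmd k) - α k * ⟪G, x (k - 1) - xstar⟫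
        ≤ (1 - α k) * Ψ (xag (k - 1)) + α k * Ψ xstar := by
      rw [hflip] at hcomb
      linarith [hB1, hB2, hcomb]
    have hqe : ‖x k - xstar‖ ^ 2 = ‖x (k - 1) - xstar‖ ^ 2
        - 2 * lam k * ⟪G, x (k - 1) - xstar⟫ + lam k ^ 2 * ‖G‖ ^ 2 := by
      have hx' : x k - xstar = (x (k - 1) - xstar) - lam k • G := by rw [hXk]; module
      rw [hx', norm_sub_sq_real, real_inner_smul_right, norm_smul, mul_pow,
        Real.norm_eq_abs, sq_abs, real_inner_comm]
      ring
    have hq2 : α k * ‖x k - xstar‖ ^ 2 = α k * (‖x (k - 1) - xstar‖ ^ 2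
        - 2 * lam k * ⟪G, x (k - 1) - xstar⟫ + lam k ^ 2 * ‖G‖ ^ 2) := by rw [hqe]
    have hG2 : 0 ≤ ‖G‖ ^ 2 := sq_nonneg _
    have hcoef : α k * lam k / 2 - β k + LΨ * β k ^ 2 / 2 ≤ 0 := by
      nlinarith [mul_nonneg (hβpos k hk).le (sub_nonneg.mpr (hβL k hk).le),
        (hstep k hk).1]
    have hd2 := mul_le_mul_of_nonneg_left hdesc (by linarith : (0:ℝ) ≤ 2 * lam k)
    have hm2 := mul_le_mul_of_nonneg_left hsum (by linarith : (0:ℝ) ≤ 2 * lam k)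
    have hc2 : 2 * lam k * ((α k * lam k / 2 - β k + LΨ * β k ^ 2 / 2) * ‖G‖ ^ 2) ≤ 0 :=
      mul_nonpos_of_nonneg_of_nonpos (by linarith) (mul_nonpos_of_nonpos_of_nonneg hcoef hG2)
    linarith [hd2, hm2, hc2, hq2]
  -- telescoping
  have hQ : ∀ N, 1 ≤ N → 2 * lam 1 * lam N * (Ψ (xag N) - Ψ xstar)
      + lam 1 * α N * ‖x N - xstar‖ ^ 2 ≤ lam N * Γ N * ‖x 0 - xstar‖ ^ 2 := by
    intro N hN
    induction N, hN using Nat.le_induction with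
    | base =>
      have h := hkey 1 le_rfl
      rw [hα1] at h
      simp only [Nat.sub_self, sub_self, zero_mul, zero_add, one_mul] at h
      rw [hα1, hΓ1]
      nlinarith [mul_le_mul_of_nonneg_left h (hlam 1 le_rfl).le]
    | succ N hN ih =>
      have hk := hkey (N + 1) (by omega)
      simp only [Nat.add_sub_cancel] at hk
      have hΓ' : Γ (N + 1) = (1 - α (N + 1)) * Γ N := by
        rw [hΓ (N + 1) (by omega)]
        simp
      have hα2 := hα (N + 1) (by omega)
      have hm := hmono N hN
      have hp1 : 0 < lam N * Γ N := mul_pos (hlam N hN) (hΓpos N hN)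
      have hp2 : 0 < lam (N + 1) * Γ (N + 1) :=
        mul_pos (hlam (N + 1) (by omega)) (hΓpos (N + 1) (by omega))
      rw [div_le_div_iff₀ hp2 hp1] at hm
      have hrN : (0:ℝ) ≤ ‖x N - xstar‖ ^ 2 := sq_nonneg _
      have hl1 := hlam 1 le_rfl
      have hlN := hlam N hN
      have hlN1 := hlam (N + 1) (by omega : 1 ≤ N + 1)
      suffices hgoal : lam N * (2 * lam 1 * lam (N + 1) * (Ψ (xag (N + 1)) - Ψ xstar)
          + lam 1 * α (N + 1) * ‖x (N + 1) - xstar‖ ^ 2)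
          ≤ lam N * (lam (N + 1) * Γ (N + 1) * ‖x 0 - xstar‖ ^ 2) by
        exact le_of_mul_le_mul_left hgoal hlN
      have e1 := mul_le_mul_of_nonneg_left hk
        (by positivity : (0:ℝ) ≤ lam 1 * lam N)
      have e2 := mul_le_mul_of_nonneg_left ih
        (mul_nonneg hlN1.le (by linarith [hα2.2] : (0:ℝ) ≤ 1 - α (N + 1)))
      have hm' : α (N + 1) * lam N ≤ α N * (lam (N + 1) * (1 - α (N + 1))) := by
        rw [hΓ'] at hm
        have hGp := hΓpos N hN
        apply le_of_mul_le_mul_right _ hGp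
        linarith [hm]
      have e3 := mul_le_mul_of_nonneg_left hm'
        (mul_nonneg hl1.le hrN)
      rw [hΓ']
      linarith [e1, e2, e3]
  -- conclusion
  intro N hN
  have hq := hQ N hN
  rw [le_div_iff₀ (by linarith [hlam 1 le_rfl] : (0:ℝ) < 2 * lam 1)]
  nlinarith [hq, hlam N hN, hlam 1 le_rfl,
    mul_nonneg (mul_nonneg (hlam 1 le_rfl).le (hα' N hN).1.le) (sq_nonneg ‖x N - xstar‖)]
end

section
/- With the specific stepsizes $\alpha_k = 2/(k+1)$, $\beta_k = 1/(2L_\Psi)$, and $\lambda_k \in [\beta_k, (1+\alpha_k/4)\beta_k]$, the constant $C_k = 1 - L_\Psi\lambda_k - \frac{L_\Psi(\lambda_k-\beta_k)^2}{2\alpha_k\Gamma_k\lambda_k}\sum_{\tau=k}^N\Gamma_\tau$ satisfies $C_k \ge 11/32$ and $\lambda_k C_k \ge 1/(6L_\Psi)$ for all $1 \le k \le N$, where $\Gamma_k = 2/(k(k+1))$. -/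
open Finset

lemma sum_gamma_telescope (k : ℕ) (hk : 1 ≤ k) :
    ∀ N : ℕ, k ≤ N + 1 →
      ∑ τ ∈ Finset.Icc k N, (2 / ((τ : ℝ) * ((τ : ℝ) + 1)))
        = 2 / (k : ℝ) - 2 / ((N : ℝ) + 1) := by
  intro N
  induction N with
  | zero =>
    intro hkN
    have hk1 : k = 1 := le_antisymm hkN hk
    subst hk1
    simp
  | succ n ih =>
    intro hkN
    rcases Nat.lt_or_ge k (n + 2) with h | h
    · have hk' : k ≤ n + 1 := Nat.lt_succ_iff.mp h
      rw [Finset.sum_Icc_succ_top hk', ih hk']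
      have hn1 : ((n : ℝ) + 1) ≠ 0 := by positivity
      have hn2 : ((n : ℝ) + 1 + 1) ≠ 0 := by positivity
      push_cast
      field_simp
      ring
    · have hk2 : k = n + 2 := le_antisymm hkN h
      subst hk2
      rw [Finset.Icc_eq_empty (by omega)]
      push_cast
      rw [Finset.sum_empty]
      ring_nf

set_option maxHeartbeats 1000000 in
theorem ag_stepsize_Ck_bound (LΨ : ℝ) (hLΨ : 0 < LΨ)
    (α β lam Γ C : ℕ → ℝ)
    (hα : ∀ k ≥ 1, α k = 2 / ((k : ℝ) + 1))
    (hβ : ∀ k ≥ 1, β k = 1 / (2 * LΨ))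
    (hlam : ∀ k ≥ 1, lam k ∈ Set.Icc (β k) ((1 + α k / 4) * β k))
    (hΓ : ∀ k ≥ 1, Γ k = 2 / ((k : ℝ) * ((k : ℝ) + 1)))
    (N : ℕ)
    (hC : ∀ k, C k = 1 - LΨ * lam k -
      LΨ * (lam k - β k) ^ 2 / (2 * α k * Γ k * lam k) * ∑ τ ∈ Finset.Icc k N, Γ τ) :
    ∀ k, 1 ≤ k → k ≤ N → C k ≥ 11 / 32 ∧ lam k * C k ≥ 1 / (6 * LΨ) := by
  intro k hk1 hkN
  have hK1 : (1 : ℝ) ≤ (k : ℝ) := by exact_mod_cast hk1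
  set K : ℝ := (k : ℝ) with hKdef
  have hKpos : 0 < K := by linarith
  have hK1pos : 0 < K + 1 := by linarith
  have hαk := hα k hk1
  have hβk := hβ k hk1
  have hΓk := hΓ k hk1
  obtain ⟨hl1, hl2⟩ := hlam k hk1
  set b : ℝ := 1 / (2 * LΨ) with hbdef
  have hbpos : 0 < b := by positivity
  have hlamb : b ≤ lam k := by rw [hβk] at hl1; exact hl1
  have hlampos : 0 < lam k := lt_of_lt_of_le hbpos hlamb
  -- upper bound on lam k : lam k - b ≤ b / (2 * (K + 1))
  have hl2' : lam k ≤ (1 + (2 / (K + 1)) / 4) * b := by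
    rw [hαk, hβk] at hl2; exact hl2
  have hmub : lam k - b ≤ b / (2 * (K + 1)) := by
    have : (1 + (2 / (K + 1)) / 4) * b = b + b / (2 * (K + 1)) := by
      field_simp; ring
    linarith [hl2'.trans_eq this]
  have hmnn : 0 ≤ lam k - b := by linarith
  -- the sum
  have hS_eq : ∑ τ ∈ Finset.Icc k N, Γ τ = 2 / K - 2 / ((N : ℝ) + 1) := by
    rw [Finset.sum_congr rfl (fun τ hτ => hΓ τ (le_trans hk1 (Finset.mem_Icc.mp hτ).1))]
    exact sum_gamma_telescope k hk1 N (by omega)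
  set S : ℝ := ∑ τ ∈ Finset.Icc k N, Γ τ with hSdef
  have hNK : K ≤ (N : ℝ) + 1 := by
    have : (k : ℝ) ≤ (N : ℝ) := by exact_mod_cast hkN
    linarith
  have hSnn : 0 ≤ S := by
    rw [hS_eq]
    have h1 : 2 / ((N : ℝ) + 1) ≤ 2 / K :=
      div_le_div_of_nonneg_left (by norm_num) hKpos hNK
    linarith
  have hSle : S ≤ 2 / K := by
    rw [hS_eq]
    have : 0 < (N : ℝ) + 1 := by linarith
    have : 0 ≤ 2 / ((N : ℝ) + 1) := by positivity
    linarith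
  have hKS : K * S ≤ 2 := by
    have := mul_le_mul_of_nonneg_left hSle (le_of_lt hKpos)
    rwa [mul_div_cancel₀ 2 (ne_of_gt hKpos)] at this
  -- rewrite the third term
  have hT_eq : LΨ * (lam k - β k) ^ 2 / (2 * α k * Γ k * lam k) * S
      = LΨ * (lam k - b) ^ 2 * K * (K + 1) ^ 2 * S / (8 * lam k) := by
    rw [hαk, hβk, hΓk]
    have hkne : (k : ℝ) ≠ 0 := ne_of_gt hKpos
    have hk1ne : (k : ℝ) + 1 ≠ 0 := ne_of_gt hK1pos
    have hlamne : lam k ≠ 0 := ne_of_gt hlampos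
    field_simp
    ring
  -- bound the third term by 1/32
  have hm : (lam k - b) * (K + 1) ≤ b / 2 := by
    have := mul_le_mul_of_nonneg_right hmub (le_of_lt hK1pos)
    have heq : b / (2 * (K + 1)) * (K + 1) = b / 2 := by
      field_simp
    linarith [heq ▸ this]
  have hm_nn : 0 ≤ (lam k - b) * (K + 1) := mul_nonneg hmnn (le_of_lt hK1pos)
  have hm2 : ((lam k - b) * (K + 1)) ^ 2 ≤ b ^ 2 / 4 := by nlinarith
  have hLb : LΨ * b = 1 / 2 := by rw [hbdef]; field_simp
  have hT_le : LΨ * (lam k - b) ^ 2 * K * (K + 1) ^ 2 * S / (8 * lam k) ≤ 1 / 32 := by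
    rw [div_le_iff₀ (by positivity)]
    have hnum : LΨ * (lam k - b) ^ 2 * K * (K + 1) ^ 2 * S
        = LΨ * (((lam k - b) * (K + 1)) ^ 2) * (K * S) := by ring
    rw [hnum]
    have h1 : LΨ * (((lam k - b) * (K + 1)) ^ 2) * (K * S)
        ≤ LΨ * (b ^ 2 / 4) * 2 := by
      have hA : LΨ * (((lam k - b) * (K + 1)) ^ 2) ≤ LΨ * (b ^ 2 / 4) :=
        mul_le_mul_of_nonneg_left hm2 (le_of_lt hLΨ)
      have hAnn : 0 ≤ LΨ * (((lam k - b) * (K + 1)) ^ 2) := by positivity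
      have hKSnn : 0 ≤ K * S := mul_nonneg (le_of_lt hKpos) hSnn
      calc LΨ * (((lam k - b) * (K + 1)) ^ 2) * (K * S)
          ≤ LΨ * (b ^ 2 / 4) * (K * S) := mul_le_mul_of_nonneg_right hA hKSnn
        _ ≤ LΨ * (b ^ 2 / 4) * 2 := mul_le_mul_of_nonneg_left hKS (by positivity)
    have h2 : LΨ * (b ^ 2 / 4) * 2 = (LΨ * b) * b / 2 := by ring
    have h3 : (LΨ * b) * b / 2 = b / 4 := by rw [hLb]; ring
    have h4 : b / 4 ≤ lam k / 4 := by linarith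
    calc LΨ * (((lam k - b) * (K + 1)) ^ 2) * (K * S)
        ≤ b / 4 := by rw [← h3, ← h2]; exact h1
      _ ≤ lam k / 4 := h4
      _ ≤ 1 / 32 * (8 * lam k) := by linarith
  -- bound LΨ * lam k ≤ 5/8
  have hαle1 : 2 / (K + 1) ≤ 1 := by
    rw [div_le_one hK1pos]; linarith
  have hLlam : LΨ * lam k ≤ 5 / 8 := by
    have h1 : lam k ≤ (1 + (2 / (K + 1)) / 4) * b := hl2'
    have h2 : (1 + (2 / (K + 1)) / 4) * b ≤ (5 / 4) * b :=
      mul_le_mul_of_nonneg_right (by linarith) (le_of_lt hbpos)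
    have h3 : LΨ * lam k ≤ LΨ * ((5 / 4) * b) :=
      mul_le_mul_of_nonneg_left (h1.trans h2) (le_of_lt hLΨ)
    have h4 : LΨ * ((5 / 4) * b) = (5 / 4) * (LΨ * b) := by ring
    rw [h4, hLb] at h3
    linarith
  -- conclude
  have hCk : C k = 1 - LΨ * lam k
      - LΨ * (lam k - b) ^ 2 * K * (K + 1) ^ 2 * S / (8 * lam k) := by
    rw [hC k, ← hSdef, hT_eq]
  have hCge : C k ≥ 11 / 32 := by
    rw [hCk]; linarith
  refine ⟨hCge, ?_⟩
  have hlC : lam k * C k ≥ b * (11 / 32) := by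
    have : b * (11 / 32) ≤ lam k * (11 / 32) := by linarith
    have h2 : lam k * (11 / 32) ≤ lam k * C k :=
      mul_le_mul_of_nonneg_left hCge (le_of_lt hlampos)
    linarith
  have hfin : 1 / (6 * LΨ) ≤ b * (11 / 32) := by
    have hb' : b * (11 / 32) = 11 / (64 * LΨ) := by rw [hbdef]; ring
    rw [hb', div_le_div_iff₀ (by positivity) (by positivity)]
    nlinarith
  linarith
end

section
/- Let $\Psi: \mathbb{R}^n \to \mathbb{R}$ be differentiable with $L_\Psi$-Lipschitz gradient, bounded below by $\Psi^*$. Running the AG iteration with $\alpha_k = 2/(k+1)$, $\beta_k = 1/(2L_\Psi)$, and $\lambda_k \in [\beta_k, (1+\alpha_k/4)\beta_k]$ yields, for any $N \ge 1$, $\min_{k=1,\ldots,N}\|\nabla\Psi(x_k^{md})\|^2 \le \frac{6L_\Psi(\Psi(x_0) - \Psi^*)}{N}$. -/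
open Finset RealInnerProductSpace

lemma ag_descent_upper {E : Type*} [NormedAddCommGroup E] [InnerProductSpace ℝ E] [CompleteSpace E]
    (Ψ : E → ℝ) (g : E → E) (L : ℝ)
    (hg : ∀ z, HasGradientAt Ψ (g z) z)
    (hLip : ∀ a b, ‖g a - g b‖ ≤ L * ‖a - b‖) (x y : E) :
    Ψ y ≤ Ψ x + ⟪g x, y - x⟫ + L / 2 * ‖y - x‖ ^ 2 := by
  set c : ℝ → E := fun t => x + t • (y - x) with hc
  have hcd : ∀ t : ℝ, HasDerivAt c (y - x) t := by
    intro t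
    have h1 : HasDerivAt (fun t : ℝ => t • (y - x)) ((1 : ℝ) • (y - x)) t :=
      (hasDerivAt_id t).smul_const (y - x)
    simpa [hc] using h1.const_add x
  have hφ : ∀ t : ℝ, HasDerivAt (fun s => Ψ (c s)) (⟪g (c t), y - x⟫) t := by
    intro t
    have := ((hg (c t)).hasFDerivAt).comp_hasDerivAt t (hcd t)
    simp only [InnerProductSpace.toDual_apply_apply] at this
    exact this
  set H : ℝ → ℝ := fun t => Ψ x + t * ⟪g x, y - x⟫ + L / 2 * t ^ 2 * ‖y - x‖ ^ 2 - Ψ (c t)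
    with hH
  have hHd : ∀ t : ℝ, HasDerivAt H
      (⟪g x, y - x⟫ + L / 2 * (2 * t) * ‖y - x‖ ^ 2 - ⟪g (c t), y - x⟫) t := by
    intro t
    have h1 : HasDerivAt (fun t : ℝ => Ψ x + t * ⟪g x, y - x⟫ + L / 2 * t ^ 2 * ‖y - x‖ ^ 2)
        (⟪g x, y - x⟫ + L / 2 * (2 * t) * ‖y - x‖ ^ 2) t := by
      have ha : HasDerivAt (fun t : ℝ => t * ⟪g x, y - x⟫) (⟪g x, y - x⟫) t := by
        simpa using (hasDerivAt_id t).mul_const (⟪g x, y - x⟫)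
      have hb : HasDerivAt (fun t : ℝ => L / 2 * t ^ 2 * ‖y - x‖ ^ 2)
          (L / 2 * (2 * t) * ‖y - x‖ ^ 2) t := by
        have := ((hasDerivAt_pow 2 t).const_mul (L / 2)).mul_const (‖y - x‖ ^ 2)
        simpa [mul_comm, mul_assoc, mul_left_comm] using this
      have := ((ha.const_add (Ψ x)).add hb)
      exact this
    exact h1.sub (hφ t)
  have hmono : MonotoneOn H (Set.Icc (0:ℝ) 1) := by
    apply monotoneOn_of_deriv_nonneg (convex_Icc 0 1)
    · exact fun t _ => (hHd t).continuousAt.continuousWithinAt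
    · exact fun t _ => ((hHd t).differentiableAt).differentiableWithinAt
    · intro t ht
      rw [interior_Icc] at ht
      rw [(hHd t).deriv]
      have hbound : ⟪g (c t) - g x, y - x⟫ ≤ L * t * ‖y - x‖ ^ 2 := by
        calc ⟪g (c t) - g x, y - x⟫ ≤ ‖g (c t) - g x‖ * ‖y - x‖ := real_inner_le_norm _ _
          _ ≤ (L * ‖c t - x‖) * ‖y - x‖ := by
              apply mul_le_mul_of_nonneg_right (hLip _ _) (norm_nonneg _)
          _ = L * t * ‖y - x‖ ^ 2 := by
              have : ‖c t - x‖ = t * ‖y - x‖ := by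
                simp [hc, norm_smul, abs_of_nonneg ht.1.le]
              rw [this]; ring
      have := inner_sub_left (𝕜 := ℝ) (g (c t)) (g x) (y - x)
      nlinarith [this, hbound]
  have h01 : H 0 ≤ H 1 := hmono (by norm_num) (by norm_num) (by norm_num)
  have hc0 : c 0 = x := by simp [hc]
  have hc1 : c 1 = y := by simp [hc]
  simp only [hH, hc0, hc1] at h01
  nlinarith [h01]

lemma ag_descent_lower {E : Type*} [NormedAddCommGroup E] [InnerProductSpace ℝ E] [CompleteSpace E]
    (Ψ : E → ℝ) (g : E → E) (L : ℝ)
    (hg : ∀ z, HasGradientAt Ψ (g z) z)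
    (hLip : ∀ a b, ‖g a - g b‖ ≤ L * ‖a - b‖) (x y : E) :
    Ψ x + ⟪g x, y - x⟫ - L / 2 * ‖y - x‖ ^ 2 ≤ Ψ y := by
  have hg' : ∀ z, HasGradientAt (fun w => -Ψ w) (-g z) z := by
    intro z
    rw [hasGradientAt_iff_hasFDerivAt]
    have := (hg z).hasFDerivAt.neg
    rw [map_neg]
    exact this
  have hLip' : ∀ a b, ‖(-g a) - (-g b)‖ ≤ L * ‖a - b‖ := by
    intro a b
    have : (-g a) - (-g b) = -(g a - g b) := by abel
    rw [this, norm_neg]; exact hLip a b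
  have := ag_descent_upper (fun w => -Ψ w) (fun z => -g z) L hg' hLip' x y
  simp only [inner_neg_left] at this
  linarith


lemma ag_sq_shrink (c a : ℝ) (h0 : 0 ≤ c) (h1 : c ≤ 1) : ((1-c)*a)^2 ≤ a^2 := by
  nlinarith [mul_nonneg (mul_nonneg h0 (show (0:ℝ) ≤ 2 - c by linarith)) (sq_nonneg a)]

lemma ag_young (p q : ℝ) : (q + p)^2 ≤ 4*q^2 + 4/3*p^2 := by
  nlinarith [sq_nonneg (p - 3*q)]

lemma ag_sq_convex (c a b : ℝ) (h0 : 0 ≤ c) (h1 : c ≤ 1) :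
    ((1-c)*a + c*b)^2 ≤ (1-c)*a^2 + c*b^2 := by
  nlinarith [mul_nonneg (mul_nonneg h0 (show (0:ℝ) ≤ 1 - c by linarith)) (sq_nonneg (a-b))]

theorem ag_nonconvex_rate {n : ℕ}
    (Ψ : EuclideanSpace ℝ (Fin n) → ℝ) (g : EuclideanSpace ℝ (Fin n) → EuclideanSpace ℝ (Fin n))
    (LΨ Ψstar : ℝ) (hLΨ : 0 < LΨ)
    (hg : ∀ x, HasGradientAt Ψ (g x) x)
    (hL : ∀ x y, ‖g x - g y‖ ≤ LΨ * ‖x - y‖)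
    (hbd : ∀ x, Ψstar ≤ Ψ x)
    (α β lam : ℕ → ℝ)
    (hα : ∀ k ≥ 1, α k = 2 / ((k : ℝ) + 1))
    (hβ : ∀ k ≥ 1, β k = 1 / (2 * LΨ))
    (hlam : ∀ k ≥ 1, lam k ∈ Set.Icc (β k) ((1 + α k / 4) * β k))
    (x xag xmd : ℕ → EuclideanSpace ℝ (Fin n))
    (hag0 : xag 0 = x 0)
    (hmd : ∀ k ≥ 1, xmd k = (1 - α k) • xag (k - 1) + α k • x (k - 1))
    (hx : ∀ k ≥ 1, x k = x (k - 1) - lam k • g (xmd k))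
    (hxag : ∀ k ≥ 1, xag k = xmd k - β k • g (xmd k)) :
    ∀ N : ℕ, 1 ≤ N → ∃ k ∈ Finset.Icc 1 N,
      ‖g (xmd k)‖ ^ 2 ≤ 6 * LΨ * (Ψ (x 0) - Ψstar) / (N : ℝ) := by
  intro N hN
  set bc : ℝ := 1 / (2 * LΨ) with hbc
  have hbc0 : 0 < bc := by rw [hbc]; positivity
  set G : ℕ → ℝ := fun k => ‖g (xmd k)‖ ^ 2 with hG
  set u : ℕ → ℝ := fun k => ‖x k - xag k‖ ^ 2 with hu
  have hu0 : u 0 = 0 := by simp [hu, hag0]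
  have hunn : ∀ k, 0 ≤ u k := fun k => sq_nonneg _
  have hGnn : ∀ k, 0 ≤ G k := fun k => sq_nonneg _
  -- values of parameters at k+1
  have hαv : ∀ k : ℕ, α (k+1) = 2 / ((k:ℝ) + 2) := by
    intro k
    rw [hα (k+1) (by omega)]
    push_cast; ring_nf
  have hα0 : ∀ k : ℕ, 0 < α (k+1) := by
    intro k; rw [hαv k]; positivity
  have hα1 : ∀ k : ℕ, α (k+1) ≤ 1 := by
    intro k; rw [hαv k, div_le_one (by positivity)]
    have : (0:ℝ) ≤ (k:ℝ) := Nat.cast_nonneg k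
    linarith
  have hβv : ∀ k : ℕ, β (k+1) = bc := fun k => hβ (k+1) (by omega)
  have hlam1 : ∀ k : ℕ, bc ≤ lam (k+1) := by
    intro k
    have := (hlam (k+1) (by omega)).1
    rwa [hβv k] at this
  have hlam2 : ∀ k : ℕ, lam (k+1) ≤ (1 + α (k+1) / 4) * bc := by
    intro k
    have := (hlam (k+1) (by omega)).2
    rwa [hβv k] at this
  have hlam2' : ∀ k : ℕ, lam (k+1) ≤ 5/4 * bc := by
    intro k
    have h2 := mul_nonneg (show (0:ℝ) ≤ 1 - α (k+1) by linarith [hα1 k]) hbc0.le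
    linarith only [hlam2 k, h2]
  -- vector identities
  have hmd' : ∀ k : ℕ, x k - xmd (k+1) = (1 - α (k+1)) • (x k - xag k) := by
    intro k
    rw [hmd (k+1) (by omega)]
    simp only [Nat.add_sub_cancel]
    module
  have hd : ∀ k : ℕ, x (k+1) - xag (k+1)
      = (1 - α (k+1)) • (x k - xag k) - (lam (k+1) - β (k+1)) • g (xmd (k+1)) := by
    intro k
    rw [hx (k+1) (by omega), hxag (k+1) (by omega), hmd (k+1) (by omega)]
    simp only [Nat.add_sub_cancel]
    module
  have hx' : ∀ k : ℕ, x (k+1) - xmd (k+1)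
      = (1 - α (k+1)) • (x k - xag k) - lam (k+1) • g (xmd (k+1)) := by
    intro k
    rw [hx (k+1) (by omega), hmd (k+1) (by omega)]
    simp only [Nat.add_sub_cancel]
    module
  -- recursion for u
  have hC : ∀ k : ℕ, u (k+1) ≤ (1 - α (k+1)) * u k + α (k+1) * (bc^2/16) * G (k+1) := by
    intro k
    set a := ‖x k - xag k‖ with ha
    set b := ‖g (xmd (k+1))‖ with hb
    have ha0 : 0 ≤ a := norm_nonneg _
    have hb0 : 0 ≤ b := norm_nonneg _
    have hαk0 := hα0 k; have hαk1 := hα1 k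
    have hδ0 : 0 ≤ lam (k+1) - β (k+1) := by
      have := (hlam (k+1) (by omega)).1; linarith
    have hδ1 : lam (k+1) - β (k+1) ≤ α (k+1) * bc / 4 := by
      rw [hβv k]; linarith only [hlam2 k]
    have hnorm : ‖x (k+1) - xag (k+1)‖ ≤ (1 - α (k+1)) * a + (α (k+1) * bc / 4) * b := by
      rw [hd k]
      refine le_trans (norm_sub_le _ _) ?_
      rw [norm_smul, norm_smul]
      simp only [Real.norm_eq_abs]
      rw [abs_of_nonneg (by linarith), abs_of_nonneg hδ0]
      simp only [← ha, ← hb]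
      have : (lam (k+1) - β (k+1)) * b ≤ (α (k+1) * bc / 4) * b :=
        mul_le_mul_of_nonneg_right hδ1 hb0
      linarith
    have hsq : u (k+1) ≤ ((1 - α (k+1)) * a + (α (k+1) * bc / 4) * b)^2 := by
      have h1 : 0 ≤ ‖x (k+1) - xag (k+1)‖ := norm_nonneg _
      have huu : u (k+1) = ‖x (k+1) - xag (k+1)‖^2 := rfl
      rw [huu]
      exact pow_le_pow_left₀ h1 hnorm 2
    have hua : u k = a^2 := rfl
    have hgb : G (k+1) = b^2 := rfl
    rw [hua, hgb]
    have h3 := ag_sq_convex (α (k+1)) a (bc/4*b) hαk0.le hαk1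
    linarith only [hsq, h3]
  -- summation bound for u
  have hD : ∀ M : ℕ, (∑ k ∈ Finset.range M, u (k+1)) + M * u M
      ≤ bc^2/8 * ∑ k ∈ Finset.range M, G (k+1) := by
    intro M
    induction M with
    | zero => simp [hu0]
    | succ M ih =>
      rw [Finset.sum_range_succ, Finset.sum_range_succ]
      have hc := hC M
      rw [hαv M] at hc
      have h2 : (0:ℝ) < (M:ℝ) + 2 := by positivity
      have hmul := mul_le_mul_of_nonneg_left hc h2.le
      have hexp : ((M:ℝ)+2) * ((1 - 2/((M:ℝ)+2)) * u M + 2/((M:ℝ)+2) * (bc^2/16) * G (M+1))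
          = (M:ℝ) * u M + bc^2/8 * G (M+1) := by
        field_simp
        ring
      rw [hexp] at hmul
      push_cast
      linarith
  -- per-step descent
  have hE : ∀ k : ℕ, Ψ (x (k+1)) ≤ Ψ (x k) - 7/(24*LΨ) * G (k+1) + (5*LΨ/2) * u k := by
    intro k
    have h1 := ag_descent_upper Ψ g LΨ hg hL (xmd (k+1)) (x (k+1))
    have h2 := ag_descent_lower Ψ g LΨ hg hL (xmd (k+1)) (x k)
    set a := ‖x k - xag k‖ with ha
    set b := ‖g (xmd (k+1))‖ with hb
    have ha0 : 0 ≤ a := norm_nonneg _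
    have hb0 : 0 ≤ b := norm_nonneg _
    have hαk0 := hα0 k; have hαk1 := hα1 k
    have hl0 : 0 ≤ lam (k+1) := by linarith [hlam1 k, hbc0]
    -- inner product computations
    have hinner1 : ⟪g (xmd (k+1)), x (k+1) - xmd (k+1)⟫
        = (1 - α (k+1)) * ⟪g (xmd (k+1)), x k - xag k⟫ - lam (k+1) * b^2 := by
      rw [hx' k, inner_sub_right, real_inner_smul_right, real_inner_smul_right,
        real_inner_self_eq_norm_sq]
    have hinner2 : ⟪g (xmd (k+1)), x k - xmd (k+1)⟫
        = (1 - α (k+1)) * ⟪g (xmd (k+1)), x k - xag k⟫ := by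
      rw [hmd' k, real_inner_smul_right]
    -- norm bounds
    have hB : ‖x k - xmd (k+1)‖^2 ≤ a^2 := by
      rw [hmd' k, norm_smul]
      simp only [Real.norm_eq_abs]
      rw [abs_of_nonneg (by linarith)]
      simp only [← ha]
      exact ag_sq_shrink _ _ hαk0.le hαk1
    have hA : ‖x (k+1) - xmd (k+1)‖^2 ≤ 4 * a^2 + 4/3 * lam (k+1)^2 * b^2 := by
      have hnorm : ‖x (k+1) - xmd (k+1)‖ ≤ (1 - α (k+1)) * a + lam (k+1) * b := by
        rw [hx' k]
        refine le_trans (norm_sub_le _ _) ?_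
        rw [norm_smul, norm_smul]
        simp only [Real.norm_eq_abs]
        rw [abs_of_nonneg (by linarith), abs_of_nonneg hl0]
        try simp only [← ha, ← hb]
      have h0 : 0 ≤ ‖x (k+1) - xmd (k+1)‖ := norm_nonneg _
      have hq : ‖x (k+1) - xmd (k+1)‖^2 ≤ ((1 - α (k+1)) * a + lam (k+1) * b)^2 :=
        pow_le_pow_left₀ h0 hnorm 2
      have hyoung := ag_young (lam (k+1) * b) ((1 - α (k+1)) * a)
      have hsm := ag_sq_shrink (α (k+1)) a hαk0.le hαk1
      linarith only [hq, hyoung, hsm]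
    -- combine
    have hcomb : Ψ (x (k+1)) ≤ Ψ (x k) - lam (k+1) * b^2
        + LΨ/2 * (‖x (k+1) - xmd (k+1)‖^2 + ‖x k - xmd (k+1)‖^2) := by
      linarith only [h1, h2, hinner1, hinner2]
    -- scalar step-size bound
    have hLb : LΨ * bc = 1/2 := by rw [hbc]; field_simp; try ring
    have hs1 : 1/2 ≤ LΨ * lam (k+1) := by
      have h := mul_le_mul_of_nonneg_left (hlam1 k) hLΨ.le
      linarith only [h, hLb]
    have hs2 : LΨ * lam (k+1) ≤ 5/8 := by
      have h := mul_le_mul_of_nonneg_left (hlam2' k) hLΨ.le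
      linarith only [h, hLb]
    have hscal : 7/(24*LΨ) ≤ lam (k+1) - 2*LΨ/3 * lam (k+1)^2 := by
      rw [div_le_iff₀ (by positivity)]
      nlinarith only [hs1, mul_nonneg (show (0:ℝ) ≤ 2*(LΨ*lam (k+1)) - 1 by linarith only [hs1])
        (show (0:ℝ) ≤ 5 - 8*(LΨ*lam (k+1)) by linarith only [hs2])]
    have hscalb : 7/(24*LΨ) * b^2 ≤ (lam (k+1) - 2*LΨ/3 * lam (k+1)^2) * b^2 :=
      mul_le_mul_of_nonneg_right hscal (sq_nonneg b)
    have h5 : LΨ/2 * (‖x (k+1) - xmd (k+1)‖^2 + ‖x k - xmd (k+1)‖^2)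
        ≤ LΨ/2 * (4 * a^2 + 4/3 * lam (k+1)^2 * b^2 + a^2) := by
      apply mul_le_mul_of_nonneg_left (by linarith [hA, hB]) (by positivity)
    have hGb : G (k+1) = b^2 := rfl
    have huk : u k = a^2 := rfl
    rw [hGb, huk]
    linarith only [hcomb, h5, hscalb]
  -- telescoping
  have hT : ∀ M : ℕ, Ψ (x M) ≤ Ψ (x 0) - 7/(24*LΨ) * (∑ k ∈ Finset.range M, G (k+1))
      + (5*LΨ/2) * (∑ k ∈ Finset.range M, u k) := by
    intro M
    induction M with
    | zero => simp
    | succ M ih =>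
      rw [Finset.sum_range_succ, Finset.sum_range_succ]
      have := hE M
      linarith
  -- bound on sum of u
  obtain ⟨M, rfl⟩ : ∃ M, N = M + 1 := ⟨N - 1, by omega⟩
  have hsum_u : ∑ k ∈ Finset.range (M+1), u k ≤ bc^2/8 * ∑ k ∈ Finset.range (M+1), G (k+1) := by
    have h1 : ∑ k ∈ Finset.range (M+1), u k = (∑ k ∈ Finset.range M, u (k+1)) + u 0 :=
      Finset.sum_range_succ' u M
    have h2 := hD M
    have h3 : bc^2/8 * ∑ k ∈ Finset.range M, G (k+1) ≤ bc^2/8 * ∑ k ∈ Finset.range (M+1), G (k+1) := by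
      apply mul_le_mul_of_nonneg_left _ (by positivity)
      rw [Finset.sum_range_succ]
      linarith [hGnn (M+1)]
    have h4 : (0:ℝ) ≤ (M:ℝ) * u M := mul_nonneg (Nat.cast_nonneg M) (hunn M)
    rw [h1, hu0]
    linarith
  set S : ℝ := ∑ k ∈ Finset.range (M+1), G (k+1) with hS
  have hSnn : 0 ≤ S := Finset.sum_nonneg fun k _ => hGnn (k+1)
  have hLb : LΨ * bc = 1/2 := by rw [hbc]; field_simp; try ring
  have keyineq : 41/96 * bc * S ≤ Ψ (x 0) - Ψstar := by
    have h1 := hT (M+1)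
    have h2 := hbd (x (M+1))
    have h3 : (5*LΨ/2) * (∑ k ∈ Finset.range (M+1), u k) ≤ (5*LΨ/2) * (bc^2/8 * S) :=
      mul_le_mul_of_nonneg_left hsum_u (by positivity)
    have e1 : 7/(24*LΨ) = 7/12 * bc := by rw [hbc]; ring
    have e2 : (5*LΨ/2) * (bc^2/8 * S) = 5/16 * (LΨ*bc) * bc * S := by ring
    rw [hLb] at e2
    rw [e1] at h1
    linarith only [h1, h2, h3, e2]
  -- convert to Icc sum
  have hIcc : ∑ k ∈ Finset.Icc 1 (M+1), G k = S := by
    rw [hS, ← Finset.Ico_add_one_right_eq_Icc, Finset.sum_Ico_eq_sum_range]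
    simp [add_comm]
  -- final step
  have hcard : (Finset.Icc 1 (M+1)).card = M + 1 := by
    rw [Nat.card_Icc]; omega
  have hfinal : ∑ k ∈ Finset.Icc 1 (M+1), G k
      ≤ ∑ k ∈ Finset.Icc 1 (M+1), 6 * LΨ * (Ψ (x 0) - Ψstar) / ((M+1 : ℕ) : ℝ) := by
    rw [Finset.sum_const, hcard, hIcc, nsmul_eq_mul]
    have hM1 : (0:ℝ) < ((M+1 : ℕ) : ℝ) := by positivity
    have hclear : ((M+1:ℕ):ℝ) * (6 * LΨ * (Ψ (x 0) - Ψstar) / ((M+1 : ℕ) : ℝ))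
        = 6 * LΨ * (Ψ (x 0) - Ψstar) := by
      field_simp
    rw [hclear]
    have h6 := mul_le_mul_of_nonneg_left keyineq (show (0:ℝ) ≤ 6*LΨ by positivity)
    have h7 : LΨ * bc * S = 1/2 * S := by rw [hLb]
    linarith only [h6, h7, hSnn]
  obtain ⟨k, hk, hkle⟩ := Finset.exists_le_of_sum_le ⟨1, by simp⟩ hfinal
  exact ⟨k, hk, hkle⟩
end

section
/- In the AG algorithm, the iterates satisfy the identity $x_k^{ag} - x_k = \Gamma_k\sum_{\tau=1}^k \frac{\lambda_\tau - \beta_\tau}{\Gamma_\tau}\nabla\Psi(x_\tau^{md})$, and consequently, by Jensen's inequality applied to $\|\cdot\|^2$ with weights $\Gamma_k\alpha_\tau/\Gamma_\tau$, $\|x_k^{ag} - x_k\|^2 \le \Gamma_k\sum_{\tau=1}^k \frac{(\lambda_\tau - \beta_\tau)^2}{\Gamma_\tau\alpha_\tau}\|\nabla\Psi(x_\tau^{md})\|^2$. -/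
open Finset

theorem ag_iterate_identity {n : ℕ}
    (Ψ : EuclideanSpace ℝ (Fin n) → ℝ) (g : EuclideanSpace ℝ (Fin n) → EuclideanSpace ℝ (Fin n))
    (hg : ∀ x, HasGradientAt Ψ (g x) x)
    (α β lam Γ : ℕ → ℝ)
    (hα1 : α 1 = 1) (hα : ∀ k ≥ 2, α k ∈ Set.Ioo (0:ℝ) 1)
    (hβ : ∀ k ≥ 1, 0 < β k) (hlam : ∀ k ≥ 1, 0 < lam k)
    (hΓ1 : Γ 1 = 1) (hΓ : ∀ k ≥ 2, Γ k = (1 - α k) * Γ (k - 1))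
    (x xag xmd : ℕ → EuclideanSpace ℝ (Fin n))
    (hag0 : xag 0 = x 0)
    (hmd : ∀ k ≥ 1, xmd k = (1 - α k) • xag (k - 1) + α k • x (k - 1))
    (hx : ∀ k ≥ 1, x k = x (k - 1) - lam k • g (xmd k))
    (hxag : ∀ k ≥ 1, xag k = xmd k - β k • g (xmd k)) :
    ∀ k ≥ 1,
      (xag k - x k = Γ k • ∑ τ ∈ Finset.Icc 1 k, ((lam τ - β τ) / Γ τ) • g (xmd τ)) ∧
      ‖xag k - x k‖ ^ 2 ≤
        Γ k * ∑ τ ∈ Finset.Icc 1 k, (lam τ - β τ) ^ 2 / (Γ τ * α τ) * ‖g (xmd τ)‖ ^ 2 := by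
  have hαpos : ∀ k, 1 ≤ k → 0 < α k := by
    intro k hk
    rcases eq_or_lt_of_le hk with h | h
    · rw [← h, hα1]; norm_num
    · exact (hα k h).1
  have hαlt : ∀ k, 2 ≤ k → α k < 1 := fun k hk => (hα k hk).2
  have hΓpos : ∀ k, 1 ≤ k → 0 < Γ k := by
    intro k hk
    induction k, hk using Nat.le_induction with
    | base => rw [hΓ1]; norm_num
    | succ k hk ih =>
      rw [hΓ (k+1) (by omega)]
      simp only [Nat.add_sub_cancel]
      exact mul_pos (by linarith [hαlt (k+1) (by omega)]) ih
  have hsum : ∀ k, 1 ≤ k → ∑ τ ∈ Icc 1 k, α τ / Γ τ = 1 / Γ k := by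
    intro k hk
    induction k, hk using Nat.le_induction with
    | base => simp [hα1, hΓ1]
    | succ k hk ih =>
      rw [Finset.sum_Icc_succ_top (by omega), ih, hΓ (k+1) (by omega)]
      simp only [Nat.add_sub_cancel]
      have h1 : Γ k ≠ 0 := (hΓpos k hk).ne'
      have h2 : (1 - α (k+1)) ≠ 0 := by
        have := hαlt (k+1) (by omega); linarith
      field_simp
      ring
  have hid : ∀ k, 1 ≤ k →
      xag k - x k = Γ k • ∑ τ ∈ Icc 1 k, ((lam τ - β τ) / Γ τ) • g (xmd τ) := by
    intro k hk
    induction k, hk using Nat.le_induction with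
    | base =>
      have hmd1 : xmd 1 = x 0 := by
        rw [hmd 1 le_rfl, hα1]; simp
      have hss : ∑ τ ∈ Icc 1 1, ((lam τ - β τ) / Γ τ) • g (xmd τ)
          = ((lam 1 - β 1) / Γ 1) • g (xmd 1) := by simp
      rw [hxag 1 le_rfl, hx 1 le_rfl, hss, hmd1, hΓ1, div_one, one_smul]
      module
    | succ k hk ih =>
      have hΓk : Γ (k+1) = (1 - α (k+1)) * Γ k := by
        rw [hΓ (k+1) (by omega)]; simp
      have hne : Γ (k+1) ≠ 0 := (hΓpos (k+1) (by omega)).ne'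
      rw [Finset.sum_Icc_succ_top (by omega : 1 ≤ k+1)]
      have e1 : xag (k+1) - x (k+1)
          = (1 - α (k+1)) • (xag k - x k) + (lam (k+1) - β (k+1)) • g (xmd (k+1)) := by
        rw [hxag (k+1) (by omega), hx (k+1) (by omega), hmd (k+1) (by omega)]
        simp only [Nat.add_sub_cancel]
        module
      rw [e1, ih, smul_add, smul_smul, ← hΓk, smul_smul,
        mul_div_cancel₀ _ hne]
  intro k hk
  refine ⟨hid k hk, ?_⟩
  have h1 : ‖xag k - x k‖ = Γ k * ‖∑ τ ∈ Icc 1 k, ((lam τ - β τ) / Γ τ) • g (xmd τ)‖ := by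
    rw [hid k hk, norm_smul, Real.norm_eq_abs, abs_of_pos (hΓpos k hk)]
  have h2 : ‖∑ τ ∈ Icc 1 k, ((lam τ - β τ) / Γ τ) • g (xmd τ)‖
      ≤ ∑ τ ∈ Icc 1 k, |lam τ - β τ| / Γ τ * ‖g (xmd τ)‖ := by
    refine (norm_sum_le _ _).trans (Finset.sum_le_sum fun τ hτ => ?_)
    have hτ1 : 1 ≤ τ := (Finset.mem_Icc.1 hτ).1
    rw [norm_smul, Real.norm_eq_abs, abs_div, abs_of_pos (hΓpos τ hτ1)]
  have hCS : (∑ τ ∈ Icc 1 k, |lam τ - β τ| / Γ τ * ‖g (xmd τ)‖)^2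
      ≤ (∑ τ ∈ Icc 1 k, α τ / Γ τ) *
        ∑ τ ∈ Icc 1 k, (lam τ - β τ)^2 / (Γ τ * α τ) * ‖g (xmd τ)‖^2 := by
    have key := Finset.sum_mul_sq_le_sq_mul_sq (Icc 1 k)
      (fun τ => Real.sqrt (α τ / Γ τ))
      (fun τ => |lam τ - β τ| / Γ τ * ‖g (xmd τ)‖ / Real.sqrt (α τ / Γ τ))
    have e1 : ∀ τ ∈ Icc 1 k,
        Real.sqrt (α τ / Γ τ) * (|lam τ - β τ| / Γ τ * ‖g (xmd τ)‖ / Real.sqrt (α τ / Γ τ))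
          = |lam τ - β τ| / Γ τ * ‖g (xmd τ)‖ := by
      intro τ hτ
      have hτ1 : 1 ≤ τ := (Finset.mem_Icc.1 hτ).1
      have hw : (0:ℝ) < α τ / Γ τ := div_pos (hαpos τ hτ1) (hΓpos τ hτ1)
      have hs : Real.sqrt (α τ / Γ τ) ≠ 0 := by positivity
      field_simp
    have e2 : ∀ τ ∈ Icc 1 k, Real.sqrt (α τ / Γ τ) ^ 2 = α τ / Γ τ := by
      intro τ hτ
      have hτ1 : 1 ≤ τ := (Finset.mem_Icc.1 hτ).1
      exact Real.sq_sqrt (div_pos (hαpos τ hτ1) (hΓpos τ hτ1)).le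
    have e3 : ∀ τ ∈ Icc 1 k,
        (|lam τ - β τ| / Γ τ * ‖g (xmd τ)‖ / Real.sqrt (α τ / Γ τ)) ^ 2
          = (lam τ - β τ)^2 / (Γ τ * α τ) * ‖g (xmd τ)‖^2 := by
      intro τ hτ
      have hτ1 : 1 ≤ τ := (Finset.mem_Icc.1 hτ).1
      have hwα := hαpos τ hτ1
      have hwΓ := hΓpos τ hτ1
      rw [div_pow, mul_pow, div_pow, Real.sq_sqrt (div_pos hwα hwΓ).le, sq_abs]
      field_simp
    rw [Finset.sum_congr rfl e1, Finset.sum_congr rfl e2, Finset.sum_congr rfl e3] at key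
    exact key
  have hS : (0:ℝ) ≤ ∑ τ ∈ Icc 1 k, |lam τ - β τ| / Γ τ * ‖g (xmd τ)‖ := by
    refine Finset.sum_nonneg fun τ hτ => ?_
    have hτ1 : 1 ≤ τ := (Finset.mem_Icc.1 hτ).1
    have := hΓpos τ hτ1
    positivity
  have hΓk := hΓpos k hk
  rw [hsum k hk] at hCS
  have h3 : ‖xag k - x k‖^2 ≤ (Γ k)^2 * (∑ τ ∈ Icc 1 k, |lam τ - β τ| / Γ τ * ‖g (xmd τ)‖)^2 := by
    rw [h1, mul_pow]
    have := sq_le_sq' (by linarith [norm_nonneg (∑ τ ∈ Icc 1 k, ((lam τ - β τ) / Γ τ) • g (xmd τ))]) h2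
    nlinarith [norm_nonneg (∑ τ ∈ Icc 1 k, ((lam τ - β τ) / Γ τ) • g (xmd τ)), hΓk.le]
  calc ‖xag k - x k‖^2 ≤ (Γ k)^2 * (∑ τ ∈ Icc 1 k, |lam τ - β τ| / Γ τ * ‖g (xmd τ)‖)^2 := h3
    _ ≤ (Γ k)^2 * ((1 / Γ k) * ∑ τ ∈ Icc 1 k, (lam τ - β τ)^2 / (Γ τ * α τ) * ‖g (xmd τ)‖^2) := by
        exact mul_le_mul_of_nonneg_left hCS (by positivity)
    _ = Γ k * ∑ τ ∈ Icc 1 k, (lam τ - β τ)^2 / (Γ τ * α τ) * ‖g (xmd τ)‖^2 := by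
        field_simp
end

section
/- Consider the AG iteration for composite optimization: $x_k^{md} = (1-\alpha_k)x_{k-1}^{ag} + \alpha_k x_{k-1}$, $x_k = \mathcal{P}(x_{k-1}, \nabla\Psi(x_k^{md}), \lambda_k)$, $x_k^{ag} = \mathcal{P}(x_k^{md}, \nabla\Psi(x_k^{md}), \beta_k)$, where $\mathcal{P}(x,y,c) = \mathrm{argmin}_u\{\langle y,u\rangle + \frac{1}{2c}\|u-x\|^2 + \mathcal{X}(u)\}$ with $\mathcal{X}$ proper closed convex. If $\alpha_k\lambda_k \le \beta_k$, then for all $x \in \mathbb{R}^n$: $\langle\nabla\Psi(x_k^{md}), x_k^{ag} - \alpha_k x - (1-\alpha_k)x_{k-1}^{ag}\rangle + \mathcal{X}(x_k^{ag}) \le (1-\alpha_k)\mathcal{X}(x_{k-1}^{ag}) + \alpha_k\mathcal{X}(x) + \frac{\alpha_k}{2\lambda_k}(\|x_{k-1}-x\|^2 - \|x_k - x\|^2) - \frac{1}{2\beta_k}\|x_k^{ag} - x_k^{md}\|^2$. -/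
open Finset
open scoped RealInnerProductSpace

lemma ereal_real {E : Type*} (X : E → EReal) (hbot : ∀ u, X u ≠ ⊥) {u : E} (h : X u ≠ ⊤) :
    ∃ r : ℝ, X u = (r : EReal) := ⟨(X u).toReal, (EReal.coe_toReal h (hbot u)).symm⟩

lemma three_point {n : ℕ}
    (X : EuclideanSpace ℝ (Fin n) → EReal)
    (hproper : ∃ u, X u ≠ ⊤) (hbot : ∀ u, X u ≠ ⊥)
    (hconv : ∀ u v : EuclideanSpace ℝ (Fin n), ∀ a b : ℝ, 0 ≤ a → 0 ≤ b → a + b = 1 →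
      X (a • u + b • v) ≤ (a : EReal) * X u + (b : EReal) * X v)
    (y xb : EuclideanSpace ℝ (Fin n)) (c : ℝ) (hc : 0 < c)
    (p : EuclideanSpace ℝ (Fin n))
    (hPp : ∀ u, ((⟪y, p⟫ + ‖p - xb‖ ^ 2 / (2 * c) : ℝ) : EReal) + X p ≤
        ((⟪y, u⟫ + ‖u - xb‖ ^ 2 / (2 * c) : ℝ) : EReal) + X u) :
    ∃ rp : ℝ, X p = (rp : EReal) ∧ ∀ u : EuclideanSpace ℝ (Fin n), ∀ ru : ℝ, X u = (ru : EReal) →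
      ⟪y, p - u⟫ + rp ≤ ru + (‖xb - u‖ ^ 2 - ‖p - u‖ ^ 2 - ‖p - xb‖ ^ 2) / (2 * c) := by
  obtain ⟨u₀, hu₀⟩ := hproper
  obtain ⟨r₀, hr₀⟩ := ereal_real X hbot hu₀
  have hpt : X p ≠ ⊤ := by
    intro h
    have := hPp u₀
    rw [h, hr₀, EReal.add_top_of_ne_bot (EReal.coe_ne_bot _), ← EReal.coe_add] at this
    exact (not_le.mpr (EReal.coe_lt_top _)) this
  obtain ⟨rp, hrp⟩ := ereal_real X hbot hpt
  refine ⟨rp, hrp, fun u ru hru => ?_⟩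
  have key : ∀ t : ℝ, 0 < t → t ≤ 1 →
      rp - ru - ⟪y, u - p⟫ - ⟪p - xb, u - p⟫ / c ≤ t * ‖u - p‖ ^ 2 / (2 * c) := by
    intro t ht ht1
    set ut := t • u + (1 - t) • p with hut
    have hcv := hconv u p t (1 - t) ht.le (by linarith) (by ring)
    rw [hru, hrp, ← hut, ← EReal.coe_mul, ← EReal.coe_mul, ← EReal.coe_add] at hcv
    have hutt : X ut ≠ ⊤ := fun h => by
      rw [h] at hcv; exact (not_le.mpr (EReal.coe_lt_top _)) hcv
    obtain ⟨rt, hrt⟩ := ereal_real X hbot hutt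
    rw [hrt, EReal.coe_le_coe_iff] at hcv
    have h1 := hPp ut
    rw [hrt, hrp, ← EReal.coe_add, ← EReal.coe_add, EReal.coe_le_coe_iff] at h1
    have e1 : ⟪y, ut⟫ = ⟪y, p⟫ + t * ⟪y, u - p⟫ := by
      rw [show ut = p + t • (u - p) by rw [hut]; module, inner_add_right, real_inner_smul_right]
    have e2 : ‖ut - xb‖ ^ 2 = ‖p - xb‖ ^ 2 + 2 * (t * ⟪p - xb, u - p⟫) + t ^ 2 * ‖u - p‖ ^ 2 := by
      rw [show ut - xb = (p - xb) + t • (u - p) by rw [hut]; module, norm_add_sq_real,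
        real_inner_smul_right, norm_smul]
      simp [mul_pow, sq_abs]
    rw [e1, e2] at h1
    have e3 : (‖p - xb‖ ^ 2 + 2 * (t * ⟪p - xb, u - p⟫) + t ^ 2 * ‖u - p‖ ^ 2) / (2 * c)
        = ‖p - xb‖ ^ 2 / (2 * c) + t * ⟪p - xb, u - p⟫ / c + t ^ 2 * ‖u - p‖ ^ 2 / (2 * c) := by
      field_simp
    rw [e3] at h1
    have h2 : t * (rp - ru - ⟪y, u - p⟫ - ⟪p - xb, u - p⟫ / c)
        ≤ t * (t * ‖u - p‖ ^ 2 / (2 * c)) := by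
      have e4 : t * ⟪p - xb, u - p⟫ / c = t * (⟪p - xb, u - p⟫ / c) := by ring
      have e5 : t ^ 2 * ‖u - p‖ ^ 2 / (2 * c) = t * (t * ‖u - p‖ ^ 2 / (2 * c)) := by ring
      nlinarith [h1, hcv]
    exact le_of_mul_le_mul_left h2 ht
  have hfinal : rp - ru - ⟪y, u - p⟫ - ⟪p - xb, u - p⟫ / c ≤ 0 := by
    refine le_of_forall_pos_le_add fun ε hε => ?_
    set t := min 1 (2 * c * ε / (‖u - p‖ ^ 2 + 1)) with htdef
    have hd : (0:ℝ) < ‖u - p‖ ^ 2 + 1 := by positivity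
    have ht : 0 < t := lt_min one_pos (by positivity)
    have h := key t ht (min_le_left _ _)
    have ht' : t * (‖u - p‖ ^ 2 + 1) ≤ 2 * c * ε := by
      have := min_le_right 1 (2 * c * ε / (‖u - p‖ ^ 2 + 1))
      rw [← htdef] at this
      calc t * (‖u - p‖ ^ 2 + 1) ≤ (2 * c * ε / (‖u - p‖ ^ 2 + 1)) * (‖u - p‖ ^ 2 + 1) :=
            mul_le_mul_of_nonneg_right this hd.le
        _ = 2 * c * ε := by field_simp
    have : t * ‖u - p‖ ^ 2 / (2 * c) ≤ ε := by
      rw [div_le_iff₀ (by positivity)]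
      nlinarith
    linarith
  have i1 : ⟪y, p - u⟫ = -⟪y, u - p⟫ := by
    rw [show p - u = -(u - p) by abel, inner_neg_right]
  have i2 : ⟪p - xb, u - p⟫ = (‖xb - u‖ ^ 2 - ‖p - u‖ ^ 2 - ‖p - xb‖ ^ 2) / 2 := by
    have h := norm_add_sq_real (p - xb) (u - p)
    rw [show p - xb + (u - p) = -(xb - u) by abel, norm_neg] at h
    rw [show p - u = -(u - p) by abel, norm_neg]
    linarith
  have i3 : ⟪p - xb, u - p⟫ / c = (‖xb - u‖ ^ 2 - ‖p - u‖ ^ 2 - ‖p - xb‖ ^ 2) / (2 * c) := by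
    rw [i2]; ring
  linarith [hfinal, i1, i3]

theorem ag_composite_three_point {n : ℕ}
    (Ψ : EuclideanSpace ℝ (Fin n) → ℝ) (g : EuclideanSpace ℝ (Fin n) → EuclideanSpace ℝ (Fin n))
    (hg : ∀ x, HasGradientAt Ψ (g x) x)
    (X : EuclideanSpace ℝ (Fin n) → EReal)
    (hproper : ∃ u, X u ≠ ⊤) (hbot : ∀ u, X u ≠ ⊥)
    (hlsc : LowerSemicontinuous X)
    (hconv : ∀ u v : EuclideanSpace ℝ (Fin n), ∀ a b : ℝ, 0 ≤ a → 0 ≤ b → a + b = 1 →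
      X (a • u + b • v) ≤ (a : EReal) * X u + (b : EReal) * X v)
    (P : EuclideanSpace ℝ (Fin n) → EuclideanSpace ℝ (Fin n) → ℝ → EuclideanSpace ℝ (Fin n))
    (hP : ∀ x y c, 0 < c → ∀ u,
      ((⟪y, P x y c⟫ + ‖P x y c - x‖ ^ 2 / (2 * c) : ℝ) : EReal) + X (P x y c) ≤
        ((⟪y, u⟫ + ‖u - x‖ ^ 2 / (2 * c) : ℝ) : EReal) + X u)
    (α β lam : ℕ → ℝ)
    (hα : ∀ k ≥ 1, α k ∈ Set.Ioc (0:ℝ) 1)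
    (hβ : ∀ k ≥ 1, 0 < β k) (hlam : ∀ k ≥ 1, 0 < lam k)
    (hstep : ∀ k ≥ 1, α k * lam k ≤ β k)
    (x xag xmd : ℕ → EuclideanSpace ℝ (Fin n))
    (hag0 : xag 0 = x 0)
    (hmd : ∀ k ≥ 1, xmd k = (1 - α k) • xag (k - 1) + α k • x (k - 1))
    (hx : ∀ k ≥ 1, x k = P (x (k - 1)) (g (xmd k)) (lam k))
    (hxag : ∀ k ≥ 1, xag k = P (xmd k) (g (xmd k)) (β k)) :
    ∀ k ≥ 1, ∀ z : EuclideanSpace ℝ (Fin n),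
      ((⟪g (xmd k), xag k - α k • z - (1 - α k) • xag (k - 1)⟫ : ℝ) : EReal) + X (xag k) ≤
        ((1 - α k : ℝ) : EReal) * X (xag (k - 1)) + ((α k : ℝ) : EReal) * X z +
          ((α k / (2 * lam k) * (‖x (k - 1) - z‖ ^ 2 - ‖x k - z‖ ^ 2)
            - 1 / (2 * β k) * ‖xag k - xmd k‖ ^ 2 : ℝ) : EReal) := by
  intro k hk z
  have hα' := hα k hk
  have hαpos : 0 < α k := hα'.1
  have hα1 : α k ≤ 1 := hα'.2
  have hβ' := hβ k hk
  have hlam' := hlam k hk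
  have hstep' := hstep k hk
  set y := g (xmd k) with hy
  -- three-point for xag k
  have hPp1 : ∀ u, ((⟪y, xag k⟫ + ‖xag k - xmd k‖ ^ 2 / (2 * β k) : ℝ) : EReal) + X (xag k) ≤
      ((⟪y, u⟫ + ‖u - xmd k‖ ^ 2 / (2 * β k) : ℝ) : EReal) + X u := by
    intro u; rw [hxag k hk]; exact hP (xmd k) y (β k) hβ' u
  obtain ⟨a1, ha1, hTP1⟩ := three_point X hproper hbot hconv y (xmd k) (β k) hβ' (xag k) hPp1
  -- three-point for x k
  have hPp2 : ∀ u, ((⟪y, x k⟫ + ‖x k - x (k-1)‖ ^ 2 / (2 * lam k) : ℝ) : EReal) + X (x k) ≤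
      ((⟪y, u⟫ + ‖u - x (k-1)‖ ^ 2 / (2 * lam k) : ℝ) : EReal) + X u := by
    intro u; rw [hx k hk]; exact hP (x (k-1)) y (lam k) hlam' u
  obtain ⟨a2, ha2, hTP2⟩ := three_point X hproper hbot hconv y (x (k-1)) (lam k) hlam' (x k) hPp2
  rw [ha1]
  by_cases hz : X z = ⊤
  · -- RHS is ⊤
    have hAnb : ((1 - α k : ℝ) : EReal) * X (xag (k-1)) ≠ ⊥ := by
      by_cases hg' : X (xag (k-1)) = ⊤
      · rw [hg']
        rcases eq_or_lt_of_le (by linarith : (0:ℝ) ≤ 1 - α k) with h0 | h0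
        · rw [← h0, EReal.coe_zero, EReal.zero_mul]; simp
        · rw [EReal.coe_mul_top_of_pos h0]; simp
      · obtain ⟨rg, hrg⟩ := ereal_real X hbot hg'
        rw [hrg, ← EReal.coe_mul]; exact EReal.coe_ne_bot _
    rw [hz, EReal.coe_mul_top_of_pos (by exact_mod_cast hαpos)]
    rw [EReal.add_top_of_ne_bot hAnb, EReal.top_add_of_ne_bot (EReal.coe_ne_bot _)]
    exact le_top
  obtain ⟨rz, hrz⟩ := ereal_real X hbot hz
  rw [hrz]
  have hTP2z := hTP2 z rz hrz
  have hns : ‖x k - x (k-1)‖ = ‖x (k-1) - x k‖ := norm_sub_rev _ _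
  rw [hns] at hTP2z
  by_cases hg' : X (xag (k-1)) = ⊤
  · -- then α k = 1, or trivial
    rcases eq_or_lt_of_le hα1 with hone | hlt
    · -- α k = 1
      have exmd : xmd k = x (k - 1) := by
        rw [hmd k hk, hone]; simp
      have hTP1x := hTP1 (x k) a2 ha2
      rw [exmd] at hTP1x
      rw [hone, exmd]
      simp only [sub_self, EReal.coe_zero, EReal.zero_mul, zero_add, zero_smul, sub_zero,
        one_smul, EReal.coe_one, one_mul]
      rw [← EReal.coe_add, ← EReal.coe_add, EReal.coe_le_coe_iff]
      have einner : ⟪y, xag k - z⟫ = ⟪y, xag k - x k⟫ + ⟪y, x k - z⟫ := by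
        rw [← inner_add_right]
        congr 1
        abel
      have hkey : ‖x (k-1) - x k‖ ^ 2 / (2 * β k) ≤ ‖x (k-1) - x k‖ ^ 2 / (2 * lam k) := by
        have hlb : lam k ≤ β k := by
          have h := hstep'; rw [hone, one_mul] at h; exact h
        apply div_le_div_of_nonneg_left (sq_nonneg _) (by positivity)
        linarith
      have hdrop : 0 ≤ ‖xag k - x k‖ ^ 2 / (2 * β k) := by positivity
      have d1 : (‖x (k-1) - x k‖ ^ 2 - ‖xag k - x k‖ ^ 2 - ‖xag k - x (k-1)‖ ^ 2) / (2 * β k)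
          = ‖x (k-1) - x k‖ ^ 2 / (2 * β k) - ‖xag k - x k‖ ^ 2 / (2 * β k)
            - ‖xag k - x (k-1)‖ ^ 2 / (2 * β k) := by ring
      have d2 : (‖x (k-1) - z‖ ^ 2 - ‖x k - z‖ ^ 2 - ‖x (k-1) - x k‖ ^ 2) / (2 * lam k)
          = ‖x (k-1) - z‖ ^ 2 / (2 * lam k) - ‖x k - z‖ ^ 2 / (2 * lam k)
            - ‖x (k-1) - x k‖ ^ 2 / (2 * lam k) := by ring
      rw [d1] at hTP1x
      rw [d2] at hTP2z
      rw [einner]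
      have d3 : 1 / (2 * lam k) * (‖x (k-1) - z‖ ^ 2 - ‖x k - z‖ ^ 2)
          = ‖x (k-1) - z‖ ^ 2 / (2 * lam k) - ‖x k - z‖ ^ 2 / (2 * lam k) := by ring
      have d4 : 1 / (2 * β k) * ‖xag k - x (k-1)‖ ^ 2
          = ‖xag k - x (k-1)‖ ^ 2 / (2 * β k) := by ring
      linarith [hTP1x, hTP2z, hkey, hdrop]
    · -- α k < 1, RHS = ⊤
      rw [hg', EReal.coe_mul_top_of_pos (by exact_mod_cast sub_pos.mpr hlt)]
      rw [EReal.top_add_of_ne_bot (by rw [← EReal.coe_mul]; exact EReal.coe_ne_bot _),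
        EReal.top_add_of_ne_bot (EReal.coe_ne_bot _)]
      exact le_top
  · -- everything real
    obtain ⟨rg, hrg⟩ := ereal_real X hbot hg'
    rw [hrg]
    set u0 : EuclideanSpace ℝ (Fin n) := (1 - α k) • xag (k-1) + α k • x k with hu0
    have hcv := hconv (xag (k-1)) (x k) (1 - α k) (α k) (by linarith) hαpos.le (by ring)
    rw [hrg, ha2, ← hu0, ← EReal.coe_mul, ← EReal.coe_mul, ← EReal.coe_add] at hcv
    have hu0t : X u0 ≠ ⊤ := fun h => by
      rw [h] at hcv; exact (not_le.mpr (EReal.coe_lt_top _)) hcv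
    obtain ⟨r0, hr0⟩ := ereal_real X hbot hu0t
    rw [hr0, EReal.coe_le_coe_iff] at hcv
    have hTP1u := hTP1 u0 r0 hr0
    rw [← EReal.coe_mul, ← EReal.coe_mul, ← EReal.coe_add, ← EReal.coe_add, ← EReal.coe_add,
      EReal.coe_le_coe_iff]
    have einner : ⟪y, xag k - α k • z - (1 - α k) • xag (k - 1)⟫
        = ⟪y, xag k - u0⟫ + α k * ⟪y, x k - z⟫ := by
      rw [← real_inner_smul_right, ← inner_add_right]
      congr 1
      rw [hu0]; module
    have enorm : ‖xmd k - u0‖ ^ 2 = α k ^ 2 * ‖x (k-1) - x k‖ ^ 2 := by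
      rw [show xmd k - u0 = α k • (x (k-1) - x k) by rw [hmd k hk, hu0]; module,
        norm_smul]
      simp [mul_pow, sq_abs]
    have hkey : α k ^ 2 * ‖x (k-1) - x k‖ ^ 2 / (2 * β k)
        ≤ α k * ‖x (k-1) - x k‖ ^ 2 / (2 * lam k) := by
      rw [div_le_div_iff₀ (by positivity) (by positivity)]
      nlinarith [sq_nonneg ‖x (k-1) - x k‖, mul_le_mul_of_nonneg_left hstep'
        (by positivity : (0:ℝ) ≤ 2 * α k * ‖x (k-1) - x k‖ ^ 2)]
    have hdrop : 0 ≤ ‖xag k - u0‖ ^ 2 / (2 * β k) := by positivity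
    have hTP2z' := mul_le_mul_of_nonneg_left hTP2z hαpos.le
    have d1 : (‖xmd k - u0‖ ^ 2 - ‖xag k - u0‖ ^ 2 - ‖xag k - xmd k‖ ^ 2) / (2 * β k)
        = α k ^ 2 * ‖x (k-1) - x k‖ ^ 2 / (2 * β k) - ‖xag k - u0‖ ^ 2 / (2 * β k)
          - ‖xag k - xmd k‖ ^ 2 / (2 * β k) := by rw [enorm]; ring
    have d2 : α k * (rz + (‖x (k-1) - z‖ ^ 2 - ‖x k - z‖ ^ 2 - ‖x (k-1) - x k‖ ^ 2) / (2 * lam k))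
        = α k * rz + α k / (2 * lam k) * (‖x (k-1) - z‖ ^ 2 - ‖x k - z‖ ^ 2)
          - α k * ‖x (k-1) - x k‖ ^ 2 / (2 * lam k) := by ring
    have d3 : 1 / (2 * β k) * ‖xag k - xmd k‖ ^ 2 = ‖xag k - xmd k‖ ^ 2 / (2 * β k) := by ring
    rw [d1] at hTP1u
    rw [d2] at hTP2z'
    have d4 : α k * (⟪y, x k - z⟫ + a2) = α k * ⟪y, x k - z⟫ + α k * a2 := by ring
    rw [d4] at hTP2z'
    rw [einner]
    linarith [hTP1u, hTP2z', hcv, hkey, hdrop]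
end

section
/- Let $\Phi = \Psi + \mathcal{X}$ where $\Psi = h$ is convex differentiable with $L_\Psi$-Lipschitz gradient (i.e., $L_f = 0$) and $\mathcal{X}$ is a proper closed convex function with bounded domain. Run the composite AG algorithm with $\alpha_k = 2/(k+1)$, $\beta_k = 1/(2L_\Psi)$, $\lambda_k = k\beta_k/2$, i.e., $x_k^{md} = (1-\alpha_k)x_{k-1}^{ag}+\alpha_k x_{k-1}$, $x_k = \mathcal{P}(x_{k-1},\nabla\Psi(x_k^{md}),\lambda_k)$, $x_k^{ag} = \mathcal{P}(x_k^{md},\nabla\Psi(x_k^{md}),\beta_k)$. If $x^*$ minimizes $\Phi$, then for any $N \ge 1$: $\Phi(x_N^{ag}) - \Phi(x^*) \le \frac{4L_\Psi\|x_0 - x^*\|^2}{N(N+1)}$. -/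
open Finset InnerProductSpace
open scoped RealInnerProductSpace

section Helpers

variable {E : Type*} [NormedAddCommGroup E] [InnerProductSpace ℝ E]

private lemma aux_norm_combo (a b : E) (t : ℝ) :
    ‖(1 - t) • a + t • b‖ ^ 2 =
      (1 - t) * ‖a‖ ^ 2 + t * ‖b‖ ^ 2 - t * (1 - t) * ‖a - b‖ ^ 2 := by
  have e : ∀ v : E, ‖v‖ ^ 2 = ⟪v, v⟫ := fun v => (real_inner_self_eq_norm_sq v).symm
  rw [e, e, e, e]
  simp only [inner_add_add_self, inner_sub_sub_self, real_inner_smul_left,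
    real_inner_smul_right]
  ring

private lemma aux_ereal_le {a b : ℝ} {p q : EReal} (hpbot : p ≠ ⊥) (hqtop : q ≠ ⊤)
    (hqbot : q ≠ ⊥) (h : (a : EReal) + p ≤ (b : EReal) + q) :
    p ≠ ⊤ ∧ a + p.toReal ≤ b + q.toReal := by
  rw [← EReal.coe_toReal hqtop hqbot, ← EReal.coe_add] at h
  have hptop : p ≠ ⊤ := by
    intro hp
    rw [hp, EReal.add_top_of_ne_bot (EReal.coe_ne_bot a)] at h
    exact (lt_irrefl _ (lt_of_le_of_lt h (EReal.coe_lt_top _))).elim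
  refine ⟨hptop, ?_⟩
  rw [← EReal.coe_toReal hptop hpbot, ← EReal.coe_add] at h
  exact_mod_cast h

private lemma aux_convex_lb [CompleteSpace E] {f : E → ℝ} {g : E → E}
    (hg : ∀ x, HasGradientAt f (g x) x) (hconv : ConvexOn ℝ Set.univ f) (x y : E) :
    f x + ⟪g x, y - x⟫ ≤ f y := by
  set v := y - x with hv
  have hline : HasDerivAt (fun t : ℝ => x + t • v) v 0 := by
    have h1 : HasDerivAt (fun t : ℝ => t • v) ((1 : ℝ) • v) 0 :=
      (hasDerivAt_id 0).smul_const v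
    simpa using h1.const_add x
  have hphi : HasDerivAt (fun t : ℝ => f (x + t • v)) ⟪g x, v⟫ 0 := by
    have := (hg (x + (0 : ℝ) • v)).hasFDerivAt.comp_hasDerivAt 0 hline
    simpa [toDual_apply_apply, Function.comp_def] using this
  have hphiconv : ConvexOn ℝ Set.univ (fun t : ℝ => f (x + t • v)) := by
    refine ⟨convex_univ, fun s _ t _ p q hp hq hpq => ?_⟩
    have hco : x + (p * s + q * t) • v = p • (x + s • v) + q • (x + t • v) := by
      rw [show p • (x + s • v) + q • (x + t • v) = (p + q) • x + (p * s + q * t) • v by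
        module, hpq, one_smul]
    simp only [smul_eq_mul, hco]
    exact hconv.2 (Set.mem_univ _) (Set.mem_univ _) hp hq hpq
  have := hphiconv.le_slope_of_hasDerivAt (Set.mem_univ (0:ℝ)) (Set.mem_univ (1:ℝ))
    one_pos hphi
  rw [slope_def_field] at this
  simp only [zero_smul, add_zero, one_smul] at this
  have h2 : ⟪g x, v⟫ ≤ f (x + v) - f x := by
    simpa [div_one] using this
  simp only [hv] at h2 ⊢
  have : x + (y - x) = y := by abel
  rw [this] at h2
  linarith

private lemma aux_descent [CompleteSpace E] {f : E → ℝ} {g : E → E} {L : ℝ}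
    (hg : ∀ x, HasGradientAt f (g x) x) (hL : ∀ x y, ‖g x - g y‖ ≤ L * ‖x - y‖)
    (hL0 : 0 ≤ L) (x y : E) :
    f y ≤ f x + ⟪g x, y - x⟫ + L * ‖y - x‖ ^ 2 := by
  set F : E → ℝ := fun z => f z - ⟪g x, z⟫ with hF
  have hFd : ∀ z : E, HasFDerivAt F ((toDual ℝ E) (g z) - (toDual ℝ E) (g x)) z := by
    intro z
    exact (hg z).hasFDerivAt.sub ((toDual ℝ E (g x)).hasFDerivAt)
  have key : ‖F y - F x‖ ≤ (L * ‖y - x‖) * ‖y - x‖ := by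
    apply (convex_segment x y).norm_image_sub_le_of_norm_hasFDerivWithin_le
      (fun z _ => (hFd z).hasFDerivWithinAt) _ (left_mem_segment ℝ x y)
      (right_mem_segment ℝ x y)
    intro z hz
    rw [show (toDual ℝ E) (g z) - (toDual ℝ E) (g x) = (toDual ℝ E) (g z - g x) by
      rw [map_sub], LinearIsometryEquiv.norm_map]
    obtain ⟨p, q, hp, hq, hpq, rfl⟩ := hz
    calc ‖g (p • x + q • y) - g x‖ ≤ L * ‖p • x + q • y - x‖ := hL _ _
      _ ≤ L * ‖y - x‖ := by
          apply mul_le_mul_of_nonneg_left _ hL0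
          rw [show p • x + q • y - x = q • (y - x) by
            rw [show p • x + q • y - x = (p + q) • x + q • (y-x) - x by module, hpq]; module]
          rw [norm_smul, Real.norm_eq_abs, abs_of_nonneg hq]
          nlinarith [norm_nonneg (y - x)]
  have h1 : F y - F x ≤ L * ‖y - x‖ * ‖y - x‖ := le_trans (le_abs_self _) key
  have h2 : F y - F x = f y - f x - ⟪g x, y - x⟫ := by
    simp only [hF, inner_sub_right]; ring
  nlinarith [h1, h2]

private lemma aux_limit {A B D : ℝ} (hD0 : 0 ≤ D)
    (h : ∀ t : ℝ, 0 < t → t ≤ 1 → A + (1 - t) * D ≤ B) : A + D ≤ B := by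
  by_contra hcon
  push_neg at hcon
  have hε0 : 0 < A + D - B := by linarith
  have h1 : 0 < (A + D - B) + D + 1 := by linarith
  have ht0pos : 0 < (A + D - B) / ((A + D - B) + D + 1) := div_pos hε0 h1
  have ht0le : (A + D - B) / ((A + D - B) + D + 1) ≤ 1 := by rw [div_le_one h1]; linarith
  have hs := h _ ht0pos ht0le
  have hlt : (A + D - B) / ((A + D - B) + D + 1) * D < A + D - B := by
    rw [div_mul_eq_mul_div, div_lt_iff₀ h1]
    nlinarith
  nlinarith [hs, hlt]

private lemma aux_prox (X : E → EReal) (hbot : ∀ u, X u ≠ ⊥)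
    (hXconv : ∀ u v : E, ∀ a b : ℝ, 0 ≤ a → 0 ≤ b → a + b = 1 →
      X (a • u + b • v) ≤ (a : EReal) * X u + (b : EReal) * X v)
    (p xc y : E) (c : ℝ) (hc : 0 < c)
    (hPmin : ∀ u, ((⟪y, p⟫ + ‖p - xc‖ ^ 2 / (2 * c) : ℝ) : EReal) + X p ≤
      ((⟪y, u⟫ + ‖u - xc‖ ^ 2 / (2 * c) : ℝ) : EReal) + X u)
    (u : E) (hu : X u ≠ ⊤) :
    X p ≠ ⊤ ∧ ⟪y, p⟫ + ‖p - xc‖ ^ 2 / (2 * c) + (X p).toReal + ‖u - p‖ ^ 2 / (2 * c) ≤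
      ⟪y, u⟫ + ‖u - xc‖ ^ 2 / (2 * c) + (X u).toReal := by
  have hbase := aux_ereal_le (hbot p) hu (hbot u) (hPmin u)
  have hptop : X p ≠ ⊤ := hbase.1
  refine ⟨hptop, ?_⟩
  set A : ℝ := ⟪y, p⟫ + ‖p - xc‖ ^ 2 / (2 * c) + (X p).toReal with hA
  set B : ℝ := ⟪y, u⟫ + ‖u - xc‖ ^ 2 / (2 * c) + (X u).toReal with hB
  set D : ℝ := ‖u - p‖ ^ 2 / (2 * c) with hD
  have hD0 : 0 ≤ D := by positivity
  have hstep : ∀ t : ℝ, 0 < t → t ≤ 1 → A + (1 - t) * D ≤ B := by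
    intro t ht ht1
    set w : E := (1 - t) • p + t • u with hw
    have hXw : X w ≤ (((1 - t) * (X p).toReal + t * (X u).toReal : ℝ) : EReal) := by
      have h1 := hXconv p u (1 - t) t (by linarith) (le_of_lt ht) (by ring)
      rw [← EReal.coe_toReal hptop (hbot p), ← EReal.coe_toReal hu (hbot u)] at h1
      rw [← EReal.coe_mul, ← EReal.coe_mul, ← EReal.coe_add] at h1
      exact h1
    have hwtop : X w ≠ ⊤ := fun h => by
      rw [h] at hXw; exact (lt_irrefl _ (lt_of_le_of_lt hXw (EReal.coe_lt_top _))).elim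
    have hwreal : (X w).toReal ≤ (1 - t) * (X p).toReal + t * (X u).toReal :=
      EReal.toReal_le_toReal hXw (hbot w) (EReal.coe_ne_top _)
    have hIw := (aux_ereal_le (hbot p) hwtop (hbot w) (hPmin w)).2
    rw [← hA] at hIw
    have hinner : ⟪y, w⟫ = (1 - t) * ⟪y, p⟫ + t * ⟪y, u⟫ := by
      simp [hw, inner_add_right, real_inner_smul_right]
    have hwxc : w - xc = (1 - t) • (p - xc) + t • (u - xc) := by rw [hw]; module
    have hnorm : ‖w - xc‖ ^ 2 = (1 - t) * ‖p - xc‖ ^ 2 + t * ‖u - xc‖ ^ 2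
        - t * (1 - t) * ‖p - u‖ ^ 2 := by
      rw [hwxc, aux_norm_combo, sub_sub_sub_cancel_right]
    have hnr : ‖p - u‖ ^ 2 = ‖u - p‖ ^ 2 := by rw [norm_sub_rev]
    have expand : ⟪y, w⟫ + ‖w - xc‖ ^ 2 / (2 * c) + (X w).toReal ≤
        (1 - t) * A + t * B - t * (1 - t) * D := by
      rw [hinner, hnorm, hnr]
      simp only [hA, hB, hD]
      have h3 : ((1 - t) * ‖p - xc‖ ^ 2 + t * ‖u - xc‖ ^ 2 - t * (1 - t) * ‖u - p‖ ^ 2)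
          / (2 * c) = (1 - t) * (‖p - xc‖ ^ 2 / (2 * c)) + t * (‖u - xc‖ ^ 2 / (2 * c))
          - t * (1 - t) * (‖u - p‖ ^ 2 / (2 * c)) := by ring
      rw [h3]
      linarith [hwreal]
    have hmul : A ≤ (1 - t) * A + t * B - t * (1 - t) * D := le_trans hIw expand
    have hmul2 : t * (A + (1 - t) * D) ≤ t * B := by nlinarith [hmul]
    exact le_of_mul_le_mul_left hmul2 ht
  exact aux_limit hD0 hstep

end Helpers
set_option maxHeartbeats 1600000 in
theorem ag_composite_convex_rate {n : ℕ}
    (Ψ : EuclideanSpace ℝ (Fin n) → ℝ) (g : EuclideanSpace ℝ (Fin n) → EuclideanSpace ℝ (Fin n))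
    (LΨ : ℝ) (hLΨ : 0 < LΨ)
    (hg : ∀ x, HasGradientAt Ψ (g x) x)
    (hL : ∀ x y, ‖g x - g y‖ ≤ LΨ * ‖x - y‖)
    (hΨconv : ConvexOn ℝ Set.univ Ψ)
    (X : EuclideanSpace ℝ (Fin n) → EReal)
    (hproper : ∃ u, X u ≠ ⊤) (hbot : ∀ u, X u ≠ ⊥)
    (hlsc : LowerSemicontinuous X)
    (hXconv : ∀ u v : EuclideanSpace ℝ (Fin n), ∀ a b : ℝ, 0 ≤ a → 0 ≤ b → a + b = 1 →
      X (a • u + b • v) ≤ (a : EReal) * X u + (b : EReal) * X v)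
    (hbdd : Bornology.IsBounded {u | X u ≠ ⊤})
    (P : EuclideanSpace ℝ (Fin n) → EuclideanSpace ℝ (Fin n) → ℝ → EuclideanSpace ℝ (Fin n))
    (hP : ∀ x y c, 0 < c → ∀ u,
      ((⟪y, P x y c⟫ + ‖P x y c - x‖ ^ 2 / (2 * c) : ℝ) : EReal) + X (P x y c) ≤
        ((⟪y, u⟫ + ‖u - x‖ ^ 2 / (2 * c) : ℝ) : EReal) + X u)
    (α β lam : ℕ → ℝ)
    (hα : ∀ k ≥ 1, α k = 2 / ((k : ℝ) + 1))
    (hβ : ∀ k ≥ 1, β k = 1 / (2 * LΨ))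
    (hlam : ∀ k ≥ 1, lam k = (k : ℝ) * β k / 2)
    (x xag xmd : ℕ → EuclideanSpace ℝ (Fin n))
    (hag0 : xag 0 = x 0)
    (hmd : ∀ k ≥ 1, xmd k = (1 - α k) • xag (k - 1) + α k • x (k - 1))
    (hx : ∀ k ≥ 1, x k = P (x (k - 1)) (g (xmd k)) (lam k))
    (hxag : ∀ k ≥ 1, xag k = P (xmd k) (g (xmd k)) (β k))
    (xstar : EuclideanSpace ℝ (Fin n))
    (hstar_dom : X xstar ≠ ⊤)
    (hmin : ∀ z, ((Ψ xstar : ℝ) : EReal) + X xstar ≤ ((Ψ z : ℝ) : EReal) + X z) :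
    ∀ N : ℕ, 1 ≤ N →
      ((Ψ (xag N) : ℝ) : EReal) + X (xag N) ≤
        ((Ψ xstar : ℝ) : EReal) + X xstar +
          ((4 * LΨ * ‖x 0 - xstar‖ ^ 2 / ((N : ℝ) * ((N : ℝ) + 1)) : ℝ) : EReal) := by
  have hL0 : (0 : ℝ) ≤ LΨ := le_of_lt hLΨ
  have prox : ∀ (xc y : EuclideanSpace ℝ (Fin n)) (c : ℝ), 0 < c →
      ∀ u, X u ≠ ⊤ → X (P xc y c) ≠ ⊤ ∧
        ⟪y, P xc y c⟫ + ‖P xc y c - xc‖ ^ 2 / (2 * c) + (X (P xc y c)).toReal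
          + ‖u - P xc y c‖ ^ 2 / (2 * c) ≤
          ⟪y, u⟫ + ‖u - xc‖ ^ 2 / (2 * c) + (X u).toReal := by
    intro xc y c hc u hu
    exact aux_prox X hbot hXconv (P xc y c) xc y c hc (hP xc y c hc) u hu
  have hβpos : ∀ k : ℕ, 1 ≤ k → 0 < β k := by
    intro k hk; rw [hβ k hk]; positivity
  have hlampos : ∀ k : ℕ, 1 ≤ k → 0 < lam k := by
    intro k hk
    have hk1 : (1 : ℝ) ≤ (k : ℝ) := by exact_mod_cast hk
    have := hβpos k hk
    rw [hlam k hk]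
    nlinarith
  have hdom_x : ∀ k : ℕ, 1 ≤ k → X (x k) ≠ ⊤ := by
    intro k hk; rw [hx k hk]
    exact (prox _ _ _ (hlampos k hk) xstar hstar_dom).1
  have hdom_xag : ∀ k : ℕ, 1 ≤ k → X (xag k) ≠ ⊤ := by
    intro k hk; rw [hxag k hk]
    exact (prox _ _ _ (hβpos k hk) xstar hstar_dom).1
  -- per-step inequality, polynomial form
  have step' : ∀ k : ℕ, 1 ≤ k →
      (k : ℝ) * ((k : ℝ) + 1) * (Ψ (xag k) + (X (xag k)).toReal) ≤
        (k : ℝ) * ((k : ℝ) - 1) * (Ψ (xag (k - 1)) + (X (xag (k - 1))).toReal) +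
        2 * (k : ℝ) * (Ψ xstar + (X xstar).toReal) +
        4 * LΨ * (‖x (k - 1) - xstar‖ ^ 2 - ‖x k - xstar‖ ^ 2) := by
    intro k hk
    have hk1 : (1 : ℝ) ≤ (k : ℝ) := by exact_mod_cast hk
    have hkpos : (0 : ℝ) < (k : ℝ) := by linarith
    have hk1pos : (0 : ℝ) < (k : ℝ) + 1 := by linarith
    have ha : α k = 2 / ((k : ℝ) + 1) := hα k hk
    have ha0 : 0 ≤ α k := by rw [ha]; positivity
    have ha1 : α k ≤ 1 := by rw [ha, div_le_one hk1pos]; linarith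
    have h1a0 : 0 ≤ 1 - α k := by linarith
    have hknz : (k : ℝ) ≠ 0 := ne_of_gt hkpos
    have hk1nz : (k : ℝ) + 1 ≠ 0 := ne_of_gt hk1pos
    have hLnz : LΨ ≠ 0 := ne_of_gt hLΨ
    have hlamval : lam k = (k : ℝ) / (4 * LΨ) := by
      rw [hlam k hk, hβ k hk, mul_one_div, div_div, show (2 * LΨ * 2) = 4 * LΨ by ring]
    -- the auxiliary point u
    have hu_pair : X ((1 - α k) • xag (k - 1) + α k • x k) ≠ ⊤ ∧
        (X ((1 - α k) • xag (k - 1) + α k • x k)).toReal ≤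
          (1 - α k) * (X (xag (k - 1))).toReal + α k * (X (x k)).toReal := by
      have hXuc := hXconv (xag (k - 1)) (x k) (1 - α k) (α k) h1a0 ha0 (by ring)
      rcases eq_or_ne (1 - α k) 0 with hcase | hcase
      · have hα1 : α k = 1 := by linarith
        rw [hcase, hα1] at hXuc ⊢
        rw [EReal.coe_zero, EReal.zero_mul, zero_add, EReal.coe_one, one_mul] at hXuc
        rw [zero_smul, one_smul, zero_add] at hXuc ⊢
        rw [zero_mul, one_mul, zero_add]
        exact ⟨hdom_x k hk, le_rfl⟩
      · have hk2 : 2 ≤ k := by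
          rcases Nat.lt_or_ge k 2 with h2 | h2
          · exfalso
            have hk1' : k = 1 := by omega
            apply hcase
            rw [hk1'] at ha ⊢
            rw [ha]; norm_num
          · exact h2
        have hag' : X (xag (k - 1)) ≠ ⊤ := hdom_xag (k - 1) (by omega)
        rw [← EReal.coe_toReal hag' (hbot _), ← EReal.coe_toReal (hdom_x k hk) (hbot _),
          ← EReal.coe_mul, ← EReal.coe_mul, ← EReal.coe_add] at hXuc
        refine ⟨fun h => ?_, EReal.toReal_le_toReal hXuc (hbot _) (EReal.coe_ne_top _)⟩
        rw [h] at hXuc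
        exact (lt_irrefl _ (lt_of_le_of_lt hXuc (EReal.coe_lt_top _))).elim
      -- descent and convexity facts
    have hd : Ψ (xag k) ≤ Ψ (xmd k) + ⟪g (xmd k), xag k - xmd k⟫
        + LΨ * ‖xag k - xmd k‖ ^ 2 := aux_descent hg hL hL0 (xmd k) (xag k)
    have hconv1 : Ψ (xmd k) + ⟪g (xmd k), xag (k - 1) - xmd k⟫ ≤ Ψ (xag (k - 1)) :=
      aux_convex_lb hg hΨconv (xmd k) (xag (k - 1))
    have hconv2 : Ψ (xmd k) + ⟪g (xmd k), xstar - xmd k⟫ ≤ Ψ xstar :=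
      aux_convex_lb hg hΨconv (xmd k) xstar
    -- prox inequalities
    have hI2 := (prox (xmd k) (g (xmd k)) (β k) (hβpos k hk)
      ((1 - α k) • xag (k - 1) + α k • x k) hu_pair.1).2
    rw [← hxag k hk] at hI2
    have hI1 := (prox (x (k - 1)) (g (xmd k)) (lam k) (hlampos k hk) xstar hstar_dom).2
    rw [← hx k hk] at hI1
    rw [show ‖xstar - x k‖ = ‖x k - xstar‖ from norm_sub_rev _ _,
      show ‖xstar - x (k - 1)‖ = ‖x (k - 1) - xstar‖ from norm_sub_rev _ _] at hI1
    -- rewrite β-divisions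
    have h2β : ∀ r : ℝ, r / (2 * β k) = r * LΨ := by
      intro r; rw [hβ k hk]; field_simp
    simp only [h2β] at hI2
    -- algebraic identities
    have humd : (1 - α k) • xag (k - 1) + α k • x k - xmd k
        = α k • (x k - x (k - 1)) := by rw [hmd k hk]; module
    have hnum : ‖(1 - α k) • xag (k - 1) + α k • x k - xmd k‖ ^ 2
        = (α k) ^ 2 * ‖x k - x (k - 1)‖ ^ 2 := by
      rw [humd, norm_smul, Real.norm_eq_abs, mul_pow, sq_abs]
    rw [hnum] at hI2
    have hudecomp : ⟪g (xmd k), (1 - α k) • xag (k - 1) + α k • x k⟫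
        = ⟪g (xmd k), xmd k⟫ + (1 - α k) * ⟪g (xmd k), xag (k - 1) - xmd k⟫
          + α k * ⟪g (xmd k), xstar - xmd k⟫ + α k * (⟪g (xmd k), x k⟫
          - ⟪g (xmd k), xstar⟫) := by
      rw [show (1 - α k) • xag (k - 1) + α k • x k = xmd k
          + ((1 - α k) • (xag (k - 1) - xmd k)
          + (α k • (xstar - xmd k) + α k • (x k - xstar))) from by module]
      simp only [inner_add_right, inner_sub_right, real_inner_smul_right]
      ring
    have e1 : ⟪g (xmd k), xag k - xmd k⟫ = ⟪g (xmd k), xag k⟫ - ⟪g (xmd k), xmd k⟫ :=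
      inner_sub_right _ _ _
    -- multiplied convexity facts
    have m1 := mul_le_mul_of_nonneg_left hconv1 h1a0
    have m2 := mul_le_mul_of_nonneg_left hconv2 ha0
    have m3 := mul_le_mul_of_nonneg_left hI1 ha0
    have hnn1 : 0 ≤ ‖(1 - α k) • xag (k - 1) + α k • x k - xag k‖ ^ 2 * LΨ :=
      mul_nonneg (sq_nonneg _) hL0
    -- normalized per-step inequality (division atoms kept syntactically identical)
    have hstep0 : Ψ (xag k) + (X (xag k)).toReal ≤
        (1 - α k) * (Ψ (xag (k - 1)) + (X (xag (k - 1))).toReal) +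
        α k * (Ψ xstar + (X xstar).toReal) +
        α k * (‖x (k - 1) - xstar‖ ^ 2 / (2 * lam k)) -
        α k * (‖x k - xstar‖ ^ 2 / (2 * lam k)) +
        (α k) ^ 2 * LΨ * ‖x k - x (k - 1)‖ ^ 2 -
        α k * (‖x k - x (k - 1)‖ ^ 2 / (2 * lam k)) := by
      have hXru := hu_pair.2
      linarith [hd, hI2, hXru, m1, m2, m3, hnn1, hudecomp, e1]
    -- multiply by k(k+1)
    have hkk0 : (0 : ℝ) ≤ (k : ℝ) * ((k : ℝ) + 1) := by positivity
    have M := mul_le_mul_of_nonneg_left hstep0 hkk0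
    have hC1 : (k : ℝ) * ((k : ℝ) + 1) * (1 - α k) = (k : ℝ) * ((k : ℝ) - 1) := by
      rw [ha]; field_simp; ring
    have hC2 : (k : ℝ) * ((k : ℝ) + 1) * (α k) = 2 * (k : ℝ) := by
      rw [ha]; field_simp
    have hD : ∀ r : ℝ, (k : ℝ) * ((k : ℝ) + 1) * (α k * (r / (2 * lam k))) = 4 * LΨ * r := by
      intro r; rw [ha, hlamval]; field_simp
    have hA2 : (k : ℝ) * ((k : ℝ) + 1) * (α k) ^ 2 ≤ 4 := by
      rw [ha, div_pow]
      rw [show (k : ℝ) * ((k : ℝ) + 1) * (2 ^ 2 / ((k : ℝ) + 1) ^ 2)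
        = 4 * (k : ℝ) / ((k : ℝ) + 1) from by field_simp; ring]
      rw [div_le_iff₀ hk1pos]; linarith
    have hC4 : (k : ℝ) * ((k : ℝ) + 1) * ((α k) ^ 2 * LΨ * ‖x k - x (k - 1)‖ ^ 2)
        ≤ 4 * (LΨ * ‖x k - x (k - 1)‖ ^ 2) := by
      have h := mul_le_mul_of_nonneg_right hA2
        (mul_nonneg hL0 (sq_nonneg ‖x k - x (k - 1)‖))
      nlinarith [h]
    have expand : (k : ℝ) * ((k : ℝ) + 1) *
        ((1 - α k) * (Ψ (xag (k - 1)) + (X (xag (k - 1))).toReal) +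
        α k * (Ψ xstar + (X xstar).toReal) +
        α k * (‖x (k - 1) - xstar‖ ^ 2 / (2 * lam k)) -
        α k * (‖x k - xstar‖ ^ 2 / (2 * lam k)) +
        (α k) ^ 2 * LΨ * ‖x k - x (k - 1)‖ ^ 2 -
        α k * (‖x k - x (k - 1)‖ ^ 2 / (2 * lam k))) =
        ((k : ℝ) * ((k : ℝ) + 1) * (1 - α k)) * (Ψ (xag (k - 1)) + (X (xag (k - 1))).toReal) +
        ((k : ℝ) * ((k : ℝ) + 1) * (α k)) * (Ψ xstar + (X xstar).toReal) +
        ((k : ℝ) * ((k : ℝ) + 1) * (α k * (‖x (k - 1) - xstar‖ ^ 2 / (2 * lam k)))) -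
        ((k : ℝ) * ((k : ℝ) + 1) * (α k * (‖x k - xstar‖ ^ 2 / (2 * lam k)))) +
        ((k : ℝ) * ((k : ℝ) + 1) * ((α k) ^ 2 * LΨ * ‖x k - x (k - 1)‖ ^ 2)) -
        ((k : ℝ) * ((k : ℝ) + 1) * (α k * (‖x k - x (k - 1)‖ ^ 2 / (2 * lam k)))) := by
      ring
    rw [expand, hC1, hC2, hD (‖x (k - 1) - xstar‖ ^ 2), hD (‖x k - xstar‖ ^ 2),
      hD (‖x k - x (k - 1)‖ ^ 2)] at M
    have hD3 := hD (‖x k - x (k - 1)‖ ^ 2)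
    linarith [M, hC4]
  -- telescoping induction
  have claim : ∀ N : ℕ, 1 ≤ N →
      (N : ℝ) * ((N : ℝ) + 1) * (Ψ (xag N) + (X (xag N)).toReal) ≤
        (N : ℝ) * ((N : ℝ) + 1) * (Ψ xstar + (X xstar).toReal) +
        4 * LΨ * (‖x 0 - xstar‖ ^ 2 - ‖x N - xstar‖ ^ 2) := by
    intro N hN
    induction N, hN using Nat.le_induction with
    | base =>
      have h := step' 1 le_rfl
      norm_num at h ⊢
      linarith [h]
    | succ N hN ih =>
      have h := step' (N + 1) (by omega)
      simp only [Nat.add_sub_cancel] at h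
      push_cast at h ⊢
      linarith [h, ih]
  -- conclusion
  intro N hN
  have hN1 : (1 : ℝ) ≤ (N : ℝ) := by exact_mod_cast hN
  have hpos : (0 : ℝ) < (N : ℝ) * ((N : ℝ) + 1) := by nlinarith
  have hreal : Ψ (xag N) + (X (xag N)).toReal ≤ (Ψ xstar + (X xstar).toReal) +
      4 * LΨ * ‖x 0 - xstar‖ ^ 2 / ((N : ℝ) * ((N : ℝ) + 1)) := by
    rw [← sub_le_iff_le_add', le_div_iff₀ hpos]
    have hnn : 0 ≤ 4 * LΨ * ‖x N - xstar‖ ^ 2 := by positivity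
    nlinarith [claim N hN, hnn]
  rw [← EReal.coe_toReal (hdom_xag N hN) (hbot _), ← EReal.coe_toReal hstar_dom (hbot _),
    ← EReal.coe_add, ← EReal.coe_add, ← EReal.coe_add]
  exact_mod_cast hreal
end
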